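/- arXiv:1403.0079 — 5 statements merged into one kernel-verified Lean document; each statement's English description precedes it below -/
import Mathlib

section
/- Let s ≥ 1, κ ≥ 0, and let r : ℤ → ℍ^{s×s} be Hermitian (r(−n) = r(n)* for all n) with at most κ negative squares. Then there exist real constants K > 0 and C > 0 such that ‖r(n)‖ ≤ K·C^{|n|} for all n ∈ ℤ, where ‖·‖ is the entrywise maximum of quaternion norms (equivalently, any fixed matrix norm, up to a change of constants). -/
noncomputable section

open MeasureTheory Matrix
open scoped ComplexOrder

abbrev Hq : Type := Quaternion ℝ

/-- The image of a complex number in the quaternions via ℂ = ℝ + ℝi. -/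
def Cq (z : ℂ) : Hq := ⟨z.re, z.im, 0, 0⟩

def qj : Hq := ⟨0, 0, 1, 0⟩

/-- cos (n t) + i sin (n t) as a quaternion. -/
def eint (n : ℤ) (t : ℝ) : Hq := ⟨Real.cos (n * t), Real.sin (n * t), 0, 0⟩

/-- Positive semidefiniteness for quaternionic matrices. -/
def QPosSemidef {m : Type*} [Fintype m] (M : Matrix m m Hq) : Prop :=
  M.conjTranspose = M ∧
    ∀ x : m → Hq, ∃ c : ℝ, 0 ≤ c ∧ dotProduct (star x) (M.mulVec x) = (c : Hq)

def qToeplitz {s : ℕ} (r : ℤ → Matrix (Fin s) (Fin s) Hq) (N : ℕ) :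
    Matrix (Fin (N+1) × Fin s) (Fin (N+1) × Fin s) Hq :=
  Matrix.of fun p q => r ((p.1 : ℤ) - (q.1 : ℤ)) p.2 q.2

def IsPosDefSeq {s : ℕ} (r : ℤ → Matrix (Fin s) (Fin s) Hq) : Prop :=
  ∀ N : ℕ, QPosSemidef (qToeplitz r N)

/-- A q-positive measure on [0,2π] in density form. -/
structure QPosDensity (s : ℕ) where
  σ : Measure ℝ
  P11 : ℝ → Matrix (Fin s) (Fin s) ℂ
  P12 : ℝ → Matrix (Fin s) (Fin s) ℂ
  P22 : ℝ → Matrix (Fin s) (Fin s) ℂ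
  finite : IsFiniteMeasure σ
  support : σ (Set.Icc (0:ℝ) (2*Real.pi))ᶜ = 0
  refl : Measure.map (fun t => 2*Real.pi - t) σ = σ
  integrable : ∀ i j, Integrable (fun t => P11 t i j) σ ∧
      Integrable (fun t => P12 t i j) σ ∧ Integrable (fun t => P22 t i j) σ
  posSemidef_ae : ∀ᵐ t ∂σ,
      (Matrix.fromBlocks (P11 t) (P12 t) (P12 t).conjTranspose (P22 t)).PosSemidef
  cond22 : ∀ᵐ t ∂σ, P22 t = (P11 (2*Real.pi - t)).map (starRingEnd ℂ)
  cond12 : ∀ᵐ t ∂σ, P12 t = - (P12 (2*Real.pi - t)).transpose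

/-- The moment of a q-positive density measure, entrywise Bochner integral. -/
def QPosDensity.moment {s : ℕ} (μ : QPosDensity s) (n : ℤ) :
    Matrix (Fin s) (Fin s) Hq :=
  Matrix.of fun i j =>
    ∫ t in Set.Icc (0:ℝ) (2*Real.pi),
      eint n t * (Cq (μ.P11 t i j) + Cq (μ.P12 t i j) * qj) ∂μ.σ

/-- The Hermitian sequence r has at most κ negative squares: every strictly
negative right ℍ-submodule for a block Toeplitz matrix has quaternionic
dimension at most κ. -/
def HasAtMostNegSquares {s : ℕ} (r : ℤ → Matrix (Fin s) (Fin s) Hq) (κ : ℕ) : Prop :=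
  ∀ N : ℕ, ∀ W : Submodule Hqᵐᵒᵖ (Fin (N+1) × Fin s → Hq),
    (∀ x ∈ W, x ≠ 0 →
      (dotProduct (star x) ((qToeplitz r N).mulVec x)).re < 0) →
    Module.finrank Hqᵐᵒᵖ W ≤ κ

namespace NegSqAux

lemma abs_re_le_norm_q (q : Hq) : |q.re| ≤ ‖q‖ := by
  rw [abs_le]
  constructor
  · nlinarith [Quaternion.normSq_eq_norm_mul_self q, Quaternion.normSq_def' q,
      sq_nonneg q.imI, sq_nonneg q.imJ, sq_nonneg q.imK, norm_nonneg q]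
  · nlinarith [Quaternion.normSq_eq_norm_mul_self q, Quaternion.normSq_def' q,
      sq_nonneg q.imI, sq_nonneg q.imJ, sq_nonneg q.imK, norm_nonneg q]

lemma re_sandwich (c : ℝ) (a : Hq) : (star a * (c : Hq) * a).re = c * ‖a‖ ^ 2 := by
  rw [mul_assoc, (Quaternion.coe_commute c a).eq, ← mul_assoc, Quaternion.star_mul_self,
    Quaternion.normSq_eq_norm_mul_self]
  norm_cast
  simp [sq]
  ring

lemma re_sandwich_le (G a b : Hq) : (star a * G * b).re ≤ ‖G‖ * ‖a‖ * ‖b‖ := by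
  have h := (abs_le.mp (abs_re_le_norm_q (star a * G * b))).2
  have : ‖star a * G * b‖ = ‖G‖ * ‖a‖ * ‖b‖ := by
    rw [norm_mul, norm_mul, norm_star]; ring
  linarith [this ▸ h]

lemma re_add_q (p q : Hq) : (p + q).re = p.re + q.re := rfl

lemma re_sum_q {ι : Type*} (sf : Finset ι) (f : ι → Hq) :
    (∑ i ∈ sf, f i).re = ∑ i ∈ sf, (f i).re := by
  induction sf using Finset.cons_induction with
  | empty => simp; rfl
  | cons a sf ha ih => simp [Finset.sum_cons, ih]

lemma le_of_sq_le_sq (a b : ℝ) (ha : 0 ≤ a) (hb : 0 ≤ b) (h : a ^ 2 ≤ b ^ 2) : a ≤ b := by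
  nlinarith

lemma star_pi_single {n : Type*} [DecidableEq n] (A : n) (a : Hq) :
    (star (Pi.single A a) : n → Hq) = Pi.single A (star a) := by
  funext i
  simp only [Pi.star_apply, Pi.single_apply]
  split <;> simp

lemma dot_single_left {n : Type*} [Fintype n] [DecidableEq n] (A : n) (a : Hq) (v : n → Hq) :
    dotProduct (star (Pi.single A a)) v = star a * v A := by
  rw [star_pi_single, single_dotProduct]

/-- value of the quadratic form on a pair of two-point vectors. -/
lemma dot_pair {n : Type*} [Fintype n] [DecidableEq n] (T : Matrix n n Hq)
    (A B A' B' : n) (a b a' b' : Hq) :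
    dotProduct (star (Pi.single A a + Pi.single B b))
      (T *ᵥ (Pi.single A' a' + Pi.single B' b'))
    = star a * T A A' * a' + star a * (T A B' * b') + star b * T B A' * a'
      + star b * (T B B' * b') := by
  rw [Matrix.mulVec_add, star_add, Matrix.mulVec_single, Matrix.mulVec_single,
    add_dotProduct, dotProduct_add, dotProduct_add,
    dot_single_left, dot_single_left, dot_single_left, dot_single_left]
  simp only [mul_assoc, Pi.smul_apply, MulOpposite.smul_eq_mul_unop, MulOpposite.unop_op,
    Matrix.col_apply]
  abel

/-- star-symmetry of the sesquilinear form for a Hermitian matrix. -/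
lemma dot_star_symm {n : Type*} [Fintype n] (T : Matrix n n Hq) (hT : T.conjTranspose = T)
    (x y : n → Hq) :
    dotProduct (star x) (T *ᵥ y) = star (dotProduct (star y) (T *ᵥ x)) := by
  simp only [dotProduct, mulVec, Pi.star_apply, star_sum, Finset.mul_sum, Finset.sum_mul]
  rw [Finset.sum_comm]
  refine Finset.sum_congr rfl fun m _ => Finset.sum_congr rfl fun m' _ => ?_
  have hTe : star (T m m') = T m' m := by
    have h1 := congrFun (congrFun hT m') m
    rw [Matrix.conjTranspose_apply] at h1
    exact h1
  rw [StarMul.star_mul, StarMul.star_mul, star_star, hTe, mul_assoc]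

/-- expansion of the quadratic form on a linear combination. -/
lemma quad_expand {n : Type*} [Fintype n] {ι : Type*} [Fintype ι] (T : Matrix n n Hq)
    (x : ι → n → Hq) (a : ι → Hq) :
    dotProduct (star fun m => ∑ k, x k m * a k) (T *ᵥ fun m => ∑ k, x k m * a k)
    = ∑ k, ∑ l, star (a k) * dotProduct (star (x k)) (T *ᵥ x l) * a l := by
  simp only [dotProduct, mulVec, Pi.star_apply, star_sum, StarMul.star_mul, Finset.mul_sum,
    Finset.sum_mul, mul_assoc]
  show (∑ m : n, ∑ m' : n, ∑ l : ι, ∑ k : ι,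
      star (a k) * (star (x k m) * (T m m' * (x l m' * a l))))
    = ∑ k : ι, ∑ l : ι, ∑ m : n, ∑ m' : n,
      star (a k) * (star (x k m) * (T m m' * (x l m' * a l)))
  calc (∑ m : n, ∑ m' : n, ∑ l : ι, ∑ k : ι,
          star (a k) * (star (x k m) * (T m m' * (x l m' * a l))))
      = ∑ m : n, ∑ m' : n, ∑ k : ι, ∑ l : ι,
          star (a k) * (star (x k m) * (T m m' * (x l m' * a l))) :=
        Finset.sum_congr rfl fun _ _ => Finset.sum_congr rfl fun _ _ => Finset.sum_comm
    _ = ∑ m : n, ∑ k : ι, ∑ m' : n, ∑ l : ι,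
          star (a k) * (star (x k m) * (T m m' * (x l m' * a l))) :=
        Finset.sum_congr rfl fun _ _ => Finset.sum_comm
    _ = ∑ k : ι, ∑ m : n, ∑ m' : n, ∑ l : ι,
          star (a k) * (star (x k m) * (T m m' * (x l m' * a l))) := Finset.sum_comm
    _ = ∑ k : ι, ∑ m : n, ∑ l : ι, ∑ m' : n,
          star (a k) * (star (x k m) * (T m m' * (x l m' * a l))) :=
        Finset.sum_congr rfl fun _ _ => Finset.sum_congr rfl fun _ _ => Finset.sum_comm
    _ = ∑ k : ι, ∑ l : ι, ∑ m : n, ∑ m' : n,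
          star (a k) * (star (x k m) * (T m m' * (x l m' * a l))) :=
        Finset.sum_congr rfl fun _ _ => Finset.sum_comm

variable {s : ℕ}

/-- entrywise max norm of `r n`, as a real number. -/
def Mv (r : ℤ → Matrix (Fin s) (Fin s) Hq) (d : ℕ) : ℝ :=
  ((Finset.univ.sup fun ij : Fin s × Fin s => ‖r (d : ℤ) ij.1 ij.2‖₊ : NNReal) : ℝ)

lemma Mv_nonneg (r : ℤ → Matrix (Fin s) (Fin s) Hq) (d : ℕ) : 0 ≤ Mv r d :=
  NNReal.coe_nonneg _

lemma entry_le_Mv (r : ℤ → Matrix (Fin s) (Fin s) Hq) (d : ℕ) (i j : Fin s) :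
    ‖r (d : ℤ) i j‖ ≤ Mv r d := by
  have h : ‖r (d : ℤ) i j‖₊ ≤ Finset.univ.sup fun ij : Fin s × Fin s => ‖r (d : ℤ) ij.1 ij.2‖₊ := by
    have := Finset.le_sup (f := fun ij : Fin s × Fin s => ‖r (d : ℤ) ij.1 ij.2‖₊)
      (Finset.mem_univ (i, j))
    simpa using this
  unfold Mv
  rw [← coe_nnnorm]
  exact_mod_cast h

lemma entry_le_Mv_int (r : ℤ → Matrix (Fin s) (Fin s) Hq)
    (hherm : ∀ n : ℤ, r (-n) = (r n).conjTranspose) (z : ℤ) (i j : Fin s) :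
    ‖r z i j‖ ≤ Mv r z.natAbs := by
  rcases Int.natAbs_eq z with hz | hz
  · rw [hz]; exact entry_le_Mv r z.natAbs i j
  · have : r z i j = star (r (z.natAbs : ℤ) j i) := by
      rw [hz, hherm (z.natAbs : ℤ)]
      simp [Matrix.conjTranspose_apply]
    rw [this, norm_star]
    exact entry_le_Mv r z.natAbs j i

lemma exists_Mv_witness (hs : 1 ≤ s) (r : ℤ → Matrix (Fin s) (Fin s) Hq) (d : ℕ) :
    ∃ i j : Fin s, ‖r (d : ℤ) i j‖ = Mv r d := by
  have hne : (Finset.univ : Finset (Fin s × Fin s)).Nonempty :=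
    ⟨(⟨0, hs⟩, ⟨0, hs⟩), Finset.mem_univ _⟩
  obtain ⟨b, -, hb⟩ := Finset.exists_mem_eq_sup Finset.univ hne
    (fun ij : Fin s × Fin s => ‖r (d : ℤ) ij.1 ij.2‖₊)
  exact ⟨b.1, b.2, by rw [Mv, hb, coe_nnnorm]⟩

/-- Record lemma: under superexponential growth, find a peak dominating
all earlier values with exponential margin. -/
lemma record (r : ℤ → Matrix (Fin s) (Fin s) Hq)
    (hS : ∀ K C : ℝ, 0 < K → 0 < C → ∃ d : ℕ, K * C ^ d < Mv r d)
    (C T : ℝ) (B : ℕ) (hC : 1 ≤ C) :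
    ∃ ν : ℕ, B < ν ∧ T ≤ Mv r ν ∧ ∀ d, d < ν → Mv r d * C ^ (ν - d) ≤ Mv r ν := by
  set K : ℝ := 1 + |T| + ∑ d ∈ Finset.range (B + 1), Mv r d with hK
  have hsum : 0 ≤ ∑ d ∈ Finset.range (B + 1), Mv r d :=
    Finset.sum_nonneg fun d _ => Mv_nonneg r d
  have hKpos : 0 < K := by positivity
  have hCpos : 0 < C := lt_of_lt_of_le one_pos hC
  obtain ⟨d₀, hd₀⟩ := hS K C hKpos hCpos
  obtain ⟨ν, hνmem, hνmax⟩ := Finset.exists_max_image (Finset.range (d₀ + 1))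
    (fun d => Mv r d * C ^ (d₀ - d)) ⟨d₀, by simp⟩
  have hνle : ν ≤ d₀ := Nat.lt_succ_iff.mp (Finset.mem_range.mp hνmem)
  have hmax : ∀ d, d ≤ d₀ → Mv r d * C ^ (d₀ - d) ≤ Mv r ν * C ^ (d₀ - ν) := by
    intro d hd
    exact hνmax d (Finset.mem_range.mpr (Nat.lt_succ_iff.mpr hd))
  have hKν : K < Mv r ν := by
    have h1 : Mv r d₀ * C ^ (d₀ - d₀) ≤ Mv r ν * C ^ (d₀ - ν) := hmax d₀ le_rfl
    simp only [Nat.sub_self, pow_zero, mul_one] at h1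
    have h2 : K * C ^ (d₀ - ν) ≤ K * C ^ d₀ := by
      apply mul_le_mul_of_nonneg_left _ hKpos.le
      exact pow_le_pow_right₀ hC (Nat.sub_le _ _)
    have h3 : K * C ^ (d₀ - ν) < Mv r ν * C ^ (d₀ - ν) := lt_of_le_of_lt h2 (lt_of_lt_of_le hd₀ h1)
    exact lt_of_mul_lt_mul_right h3 (pow_pos hCpos _).le
  refine ⟨ν, ?_, ?_, ?_⟩
  · by_contra hB
    push_neg at hB
    have : Mv r ν ≤ ∑ d ∈ Finset.range (B + 1), Mv r d :=
      Finset.single_le_sum (fun d _ => Mv_nonneg r d)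
        (Finset.mem_range.mpr (Nat.lt_succ_iff.mpr hB))
    have : Mv r ν < K := by
      rw [hK]
      have := abs_nonneg T
      linarith
    linarith
  · have : T ≤ K := by rw [hK]; have := le_abs_self T; linarith
    linarith
  · intro d hd
    have hd' : d ≤ d₀ := le_trans hd.le hνle
    have h1 := hmax d hd'
    have hsplit : d₀ - d = (ν - d) + (d₀ - ν) := by omega
    rw [hsplit, pow_add, ← mul_assoc] at h1
    exact le_of_mul_le_mul_right h1 (pow_pos hCpos _)

/-- invariant for the greedy construction of peaks -/
def Good (r : ℤ → Matrix (Fin s) (Fin s) Hq) (κ' : ℕ) (A₀ Θ : ℝ)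
    (k : ℕ) (ν : ℕ → ℕ) (t : ℕ → ℝ) : Prop :=
  ∀ i, i < k →
    (A₀ ≤ t i ∧ t i ≤ Mv r (ν i) ∧ κ' + 2 ≤ ν i ∧
      (∀ d, d < ν i → Mv r d * (Θ ^ 2 * t i) ^ (ν i - d) ≤ Mv r (ν i)) ∧
      ∀ j, j < i → (ν j + κ' + 2 ≤ ν i ∧
        Θ ^ 2 * t j * (Mv r (ν j + (i - j))) ^ 2 ≤ t i * (Mv r (ν j)) ^ 2))

lemma greedy (r : ℤ → Matrix (Fin s) (Fin s) Hq)
    (hS : ∀ K C : ℝ, 0 < K → 0 < C → ∃ d : ℕ, K * C ^ d < Mv r d)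
    (κ' : ℕ) (A₀ Θ : ℝ) (hA₀ : 1 ≤ A₀) (hΘ : 1 ≤ Θ) (k : ℕ) :
    ∃ ν t, Good r κ' A₀ Θ k ν t := by
  induction k with
  | zero => exact ⟨fun _ => 0, fun _ => 0, fun i hi => absurd hi (Nat.not_lt_zero i)⟩
  | succ k ih =>
    obtain ⟨ν, t, hG⟩ := ih
    have htpos : ∀ j, j < k → 0 < t j := fun j hj =>
      lt_of_lt_of_le (lt_of_lt_of_le one_pos hA₀) (hG j hj).1
    have hMvpos : ∀ j, j < k → 0 < Mv r (ν j) := fun j hj =>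
      lt_of_lt_of_le (htpos j hj) (hG j hj).2.1
    set tk : ℝ := A₀ + ∑ j ∈ Finset.range k,
      Θ ^ 2 * t j * (Mv r (ν j + (k - j))) ^ 2 / (Mv r (ν j)) ^ 2 with htk
    have hterm : ∀ j ∈ Finset.range k,
        0 ≤ Θ ^ 2 * t j * (Mv r (ν j + (k - j))) ^ 2 / (Mv r (ν j)) ^ 2 := by
      intro j hj
      have := htpos j (Finset.mem_range.mp hj)
      have := Mv_nonneg r (ν j + (k - j))
      positivity
    have htkA : A₀ ≤ tk := by
      rw [htk]
      nlinarith [Finset.sum_nonneg hterm]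
    have htk1 : (1:ℝ) ≤ tk := le_trans hA₀ htkA
    have hC1 : (1:ℝ) ≤ Θ ^ 2 * tk := by nlinarith
    obtain ⟨νk, hνkB, hνkT, hνkrec⟩ := record r hS (Θ ^ 2 * tk) tk
      ((Finset.range k).sup ν + κ' + 2) hC1
    refine ⟨fun m => if m = k then νk else ν m, fun m => if m = k then tk else t m, ?_⟩
    intro i hi
    rcases Nat.lt_succ_iff_lt_or_eq.mp hi with hik | hik
    · have h := hG i hik
      have hne : i ≠ k := Nat.ne_of_lt hik
      simp only [hne, if_false]
      refine ⟨h.1, h.2.1, h.2.2.1, h.2.2.2.1, ?_⟩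
      intro j hj
      have hjne : j ≠ k := Nat.ne_of_lt (lt_trans hj hik)
      simp only [hjne, if_false]
      exact h.2.2.2.2 j hj
    · subst hik
      simp only [eq_self_iff_true, if_true]
      have hsup : ∀ j, j < i → ν j ≤ (Finset.range i).sup ν := fun j hj =>
        Finset.le_sup (Finset.mem_range.mpr hj)
      refine ⟨htkA, hνkT, by omega, hνkrec, ?_⟩
      intro j hj
      have hjne : j ≠ i := Nat.ne_of_lt hj
      simp only [hjne, if_false]
      constructor
      · have := hsup j hj; omega
      · have hle : Θ ^ 2 * t j * (Mv r (ν j + (i - j))) ^ 2 / (Mv r (ν j)) ^ 2 ≤ tk := by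
          rw [htk]
          have h1 : Θ ^ 2 * t j * (Mv r (ν j + (i - j))) ^ 2 / (Mv r (ν j)) ^ 2
              ≤ ∑ m ∈ Finset.range i, Θ ^ 2 * t m * (Mv r (ν m + (i - m))) ^ 2 / (Mv r (ν m)) ^ 2 :=
            Finset.single_le_sum hterm (Finset.mem_range.mpr hj)
          linarith
        have hMv2 : 0 < (Mv r (ν j)) ^ 2 := by
          have := hMvpos j hj; positivity
        calc Θ ^ 2 * t j * (Mv r (ν j + (i - j))) ^ 2
            = (Θ ^ 2 * t j * (Mv r (ν j + (i - j))) ^ 2 / (Mv r (ν j)) ^ 2) * (Mv r (ν j)) ^ 2 := by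
              rw [div_mul_cancel₀ _ hMv2.ne']
          _ ≤ tk * (Mv r (ν j)) ^ 2 := mul_le_mul_of_nonneg_right hle hMv2.le

end NegSqAux

open NegSqAux in
set_option maxHeartbeats 1600000 in
/-- exponential bound on sequences with finitely many negative squares. -/
theorem negSquares_exponential_bound {s : ℕ} (hs : 1 ≤ s) (κ : ℕ)
    (r : ℤ → Matrix (Fin s) (Fin s) Hq)
    (hherm : ∀ n : ℤ, r (-n) = (r n).conjTranspose)
    (hneg : HasAtMostNegSquares r κ) :
    ∃ K C : ℝ, 0 < K ∧ 0 < C ∧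
      ∀ n : ℤ, ∀ i j, ‖r n i j‖ ≤ K * C ^ n.natAbs := by
  classical
  by_contra hcon
  push_neg at hcon
  have hS : ∀ K C : ℝ, 0 < K → 0 < C → ∃ d : ℕ, K * C ^ d < Mv r d := by
    intro K C hK hC
    obtain ⟨n, i, j, hn⟩ := hcon K C hK hC
    exact ⟨n.natAbs, lt_of_lt_of_le hn (entry_le_Mv_int r hherm n i j)⟩
  -- constants
  set Mv0 : ℝ := Mv r 0 with hMv0def
  have hMv0 : 0 ≤ Mv0 := Mv_nonneg r 0
  have hκR : (0:ℝ) ≤ (κ:ℝ) := Nat.cast_nonneg κ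
  set Θ : ℝ := 8 * ((κ:ℝ) + 1) with hΘdef
  have hΘ1 : (1:ℝ) ≤ Θ := by rw [hΘdef]; linarith
  have hΘpos : (0:ℝ) < Θ := by linarith
  set B0 : ℝ := ∑ f ∈ Finset.range (κ + 2), Mv r f with hB0def
  have hB0 : 0 ≤ B0 := Finset.sum_nonneg fun f _ => Mv_nonneg r f
  have hMvleB0 : ∀ f, f < κ + 2 → Mv r f ≤ B0 := fun f hf =>
    Finset.single_le_sum (fun d _ => Mv_nonneg r d) (Finset.mem_range.mpr hf)
  set A₀ : ℝ := Θ * (B0 + 1) + 4 * Mv0 + Θ ^ 2 + 4 with hA₀def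
  have hA₀1 : (1:ℝ) ≤ A₀ := by rw [hA₀def]; nlinarith
  have hA₀4M : 4 * Mv0 ≤ A₀ := by rw [hA₀def]; nlinarith
  have hA₀B : Θ * B0 + Θ ≤ A₀ := by rw [hA₀def]; nlinarith
  -- the greedy peaks
  obtain ⟨ν, t, hG⟩ := greedy r hS (κ + 1) A₀ Θ hA₀1 hΘ1 (κ + 1)
  have htA : ∀ k : Fin (κ + 1), A₀ ≤ t k := fun k => (hG k k.isLt).1
  have htM : ∀ k : Fin (κ + 1), t k ≤ Mv r (ν k) := fun k => (hG k k.isLt).2.1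
  have hνge : ∀ k : Fin (κ + 1), κ + 3 ≤ ν k := fun k => by
    have := (hG k k.isLt).2.2.1; omega
  have hrec : ∀ k : Fin (κ + 1), ∀ d, d < ν k →
      Mv r d * (Θ ^ 2 * t k) ^ (ν k - d) ≤ Mv r (ν k) :=
    fun k => (hG k k.isLt).2.2.2.1
  have hsep : ∀ k l : Fin (κ + 1), (k:ℕ) < (l:ℕ) → ν k + (κ + 3) ≤ ν l := by
    intro k l h
    have := ((hG l l.isLt).2.2.2.2 k h).1; omega
  have hlad : ∀ k l : Fin (κ + 1), (k:ℕ) < (l:ℕ) →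
      Θ ^ 2 * t k * (Mv r (ν k + ((l:ℕ) - (k:ℕ)))) ^ 2 ≤ t l * (Mv r (ν k)) ^ 2 :=
    fun k l h => ((hG l l.isLt).2.2.2.2 k h).2
  have htpos : ∀ k : Fin (κ + 1), 0 < t k := fun k =>
    lt_of_lt_of_le (by linarith) (htA k)
  have hMvνpos : ∀ k : Fin (κ + 1), 0 < Mv r (ν k) := fun k =>
    lt_of_lt_of_le (htpos k) (htM k)
  have hkκ : ∀ k : Fin (κ + 1), (k:ℕ) ≤ κ := fun k => Nat.lt_succ_iff.mp k.isLt
  -- the ambient size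
  set N : ℕ := ν κ with hNdef
  have hlastκ : ∀ k : Fin (κ + 1), κ - (k:ℕ) + ν (k:ℕ) ≤ N := by
    intro k
    rcases Nat.lt_or_ge (k:ℕ) κ with h | h
    · have h1 : ν (k:ℕ) + (κ + 3) ≤ ν κ := hsep k ⟨κ, Nat.lt_succ_self κ⟩ h
      rw [hNdef]; omega
    · have : (k:ℕ) = κ := le_antisymm (hkκ k) h
      rw [hNdef, this]; omega
  have hNge : κ + 3 ≤ N := by
    have h1 : κ + 3 ≤ ν κ := hνge ⟨κ, Nat.lt_succ_self κ⟩
    rw [hNdef]; exact h1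
  have hPlt : ∀ k : Fin (κ + 1), κ - (k:ℕ) < N + 1 := fun k => by omega
  have hQlt : ∀ k : Fin (κ + 1), κ - (k:ℕ) + ν (k:ℕ) < N + 1 := fun k => by
    have := hlastκ k; omega
  -- witnesses of the maximal entries
  choose ii jj hwit using fun k : Fin (κ + 1) => exists_Mv_witness hs r (ν (k:ℕ))
  set R : Fin (κ + 1) → Hq := fun k => r ((ν (k:ℕ) : ℕ) : ℤ) (ii k) (jj k) with hRdef
  have hRnorm : ∀ k, ‖R k‖ = Mv r (ν k) := fun k => hwit k
  set δ : Fin (κ + 1) → ℝ := fun k => t k / Mv r (ν k) with hδdef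
  have hδpos : ∀ k, 0 < δ k := fun k => div_pos (htpos k) (hMvνpos k)
  have hδle1 : ∀ k, δ k ≤ 1 := fun k => by
    rw [hδdef]
    exact div_le_one_of_le₀ (htM k) (hMvνpos k).le
  set w : Fin (κ + 1) → Hq := fun k => ((-(δ k) / Mv r (ν k) : ℝ) : Hq) * R k with hwdef
  have hwnorm : ∀ k, ‖w k‖ = δ k := by
    intro k
    rw [hwdef]
    simp only [norm_mul, Quaternion.norm_coe, hRnorm, Real.norm_eq_abs, abs_div, abs_neg,
      abs_of_nonneg (hδpos k).le, abs_of_nonneg (hMvνpos k).le]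
    rw [div_mul_cancel₀ _ (hMvνpos k).ne']
  have hcreal : ∀ k : Fin (κ + 1), (-(δ k) / Mv r (ν (k:ℕ))) * (Mv r (ν (k:ℕ)) * Mv r (ν (k:ℕ)))
      = -(t k) := by
    intro k
    have hMne : Mv r (ν (k:ℕ)) ≠ 0 := (hMvνpos k).ne'
    rw [hδdef]
    field_simp
  have hwR : ∀ k, star (w k) * R k = ((-(t k) : ℝ) : Hq) := by
    intro k
    have h1 : star (w k) = ((-(δ k) / Mv r (ν (k:ℕ)) : ℝ) : Hq) * star (R k) := by
      rw [hwdef, StarMul.star_mul, Quaternion.star_coe,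
        ← (Quaternion.coe_commute (-(δ k) / Mv r (ν (k:ℕ))) (star (R k))).eq]
    rw [h1, mul_assoc, Quaternion.star_mul_self, Quaternion.normSq_eq_norm_mul_self, hRnorm,
      ← Quaternion.coe_mul]
    exact congrArg _ (hcreal k)
  have hRw : ∀ k, star (R k) * w k = ((-(t k) : ℝ) : Hq) := by
    intro k
    have h2 := congrArg star (hwR k)
    rwa [StarMul.star_mul, star_star, Quaternion.star_coe] at h2
  -- vectors
  set P : Fin (κ + 1) → Fin (N + 1) × Fin s := fun k => (⟨κ - (k:ℕ), hPlt k⟩, jj k) with hPdef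
  set Q : Fin (κ + 1) → Fin (N + 1) × Fin s :=
    fun k => (⟨κ - (k:ℕ) + ν (k:ℕ), hQlt k⟩, ii k) with hQdef
  set x : Fin (κ + 1) → (Fin (N + 1) × Fin s → Hq) :=
    fun k => Pi.single (P k) 1 + Pi.single (Q k) (w k) with hxdef
  set T : Matrix (Fin (N + 1) × Fin s) (Fin (N + 1) × Fin s) Hq := qToeplitz r N with hTdef
  have hTPP : ∀ k l : Fin (κ + 1), T (P k) (P l)
      = r (((κ - (k:ℕ) : ℕ) : ℤ) - ((κ - (l:ℕ) : ℕ) : ℤ)) (jj k) (jj l) := fun k l => rfl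
  have hTPQ : ∀ k l : Fin (κ + 1), T (P k) (Q l)
      = r (((κ - (k:ℕ) : ℕ) : ℤ) - ((κ - (l:ℕ) + ν (l:ℕ) : ℕ) : ℤ)) (jj k) (ii l) :=
    fun k l => rfl
  have hTQP : ∀ k l : Fin (κ + 1), T (Q k) (P l)
      = r (((κ - (k:ℕ) + ν (k:ℕ) : ℕ) : ℤ) - ((κ - (l:ℕ) : ℕ) : ℤ)) (ii k) (jj l) :=
    fun k l => rfl
  have hTQQ : ∀ k l : Fin (κ + 1), T (Q k) (Q l)
      = r (((κ - (k:ℕ) + ν (k:ℕ) : ℕ) : ℤ) - ((κ - (l:ℕ) + ν (l:ℕ) : ℕ) : ℤ)) (ii k) (ii l) :=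
    fun k l => rfl
  have hTherm : T.conjTranspose = T := by
    rw [hTdef]
    apply Matrix.ext
    rintro ⟨a, i⟩ ⟨b, j⟩
    rw [Matrix.conjTranspose_apply]
    show star (r ((b:ℤ) - (a:ℤ)) j i) = r ((a:ℤ) - (b:ℤ)) i j
    have h2 : (a:ℤ) - (b:ℤ) = -((b:ℤ) - (a:ℤ)) := by ring
    rw [h2, hherm ((b:ℤ) - (a:ℤ))]
    simp [Matrix.conjTranspose_apply]
  set Φ : Fin (κ + 1) → Fin (κ + 1) → Hq :=
    fun k l => dotProduct (star (x k)) (T *ᵥ x l) with hΦdef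
  have hΦeq : ∀ k l, Φ k l = T (P k) (P l) + T (P k) (Q l) * w l
      + star (w k) * T (Q k) (P l) + star (w k) * (T (Q k) (Q l) * w l) := by
    intro k l
    simp only [hΦdef, hxdef]
    rw [dot_pair]
    simp only [star_one, one_mul, mul_one]
    -- diagonal entry bounds
  have hE0 : ∀ k : Fin (κ + 1), ‖T (P k) (P k)‖ ≤ Mv0 := by
    intro k
    rw [hTPP k k]
    have h := entry_le_Mv_int r hherm
      (((κ - (k:ℕ) : ℕ) : ℤ) - ((κ - (k:ℕ) : ℕ) : ℤ)) (jj k) (jj k)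
    have harg : ((((κ - (k:ℕ) : ℕ) : ℤ) - ((κ - (k:ℕ) : ℕ) : ℤ))).natAbs = 0 := by omega
    rw [harg] at h
    exact h
  have hEQ : ∀ k : Fin (κ + 1), ‖T (Q k) (Q k)‖ ≤ Mv0 := by
    intro k
    rw [hTQQ k k]
    have h := entry_le_Mv_int r hherm
      (((κ - (k:ℕ) + ν (k:ℕ) : ℕ) : ℤ) - ((κ - (k:ℕ) + ν (k:ℕ) : ℕ) : ℤ)) (ii k) (ii k)
    have harg : ((((κ - (k:ℕ) + ν (k:ℕ) : ℕ) : ℤ) - ((κ - (k:ℕ) + ν (k:ℕ) : ℕ) : ℤ))).natAbs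
        = 0 := by omega
    rw [harg] at h
    exact h
  have hdiag : ∀ (k : Fin (κ + 1)) (c : Hq),
      (star c * Φ k k * c).re ≤ 2 * Mv0 * ‖c‖ ^ 2 - 2 * t k * ‖c‖ ^ 2 := by
    intro k c
    have e1 : T (P k) (Q k) = star (R k) := by
      rw [hTPQ k k]
      have harg : ((κ - (k:ℕ) : ℕ) : ℤ) - ((κ - (k:ℕ) + ν (k:ℕ) : ℕ) : ℤ)
          = -((ν (k:ℕ) : ℕ) : ℤ) := by omega
      rw [harg, hherm]
      simp [Matrix.conjTranspose_apply, hRdef]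
    have e2 : T (Q k) (P k) = R k := by
      rw [hTQP k k]
      have harg : ((κ - (k:ℕ) + ν (k:ℕ) : ℕ) : ℤ) - ((κ - (k:ℕ) : ℕ) : ℤ)
          = ((ν (k:ℕ) : ℕ) : ℤ) := by omega
      rw [harg, hRdef]
    have hΦkk : Φ k k = (T (P k) (P k) + star (w k) * (T (Q k) (Q k) * w k))
        + ((-(2 * t k) : ℝ) : Hq) := by
      rw [hΦeq k k, e1, e2, hRw k, hwR k,
        show (-(2 * t k) : ℝ) = (-(t k)) + (-(t k)) by ring, Quaternion.coe_add]
      abel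
    have hnormE : ‖T (P k) (P k) + star (w k) * (T (Q k) (Q k) * w k)‖ ≤ 2 * Mv0 := by
      have h1 := hE0 k
      have h2 : ‖star (w k) * (T (Q k) (Q k) * w k)‖ ≤ Mv0 := by
        rw [norm_mul, norm_mul, norm_star, hwnorm]
        have h3 := hEQ k
        have h4 := hδle1 k
        have h5 := (hδpos k).le
        have hin : ‖T (Q k) (Q k)‖ * δ k ≤ Mv0 := by
          calc ‖T (Q k) (Q k)‖ * δ k ≤ Mv0 * 1 := mul_le_mul h3 h4 h5 hMv0
            _ = Mv0 := mul_one _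
        calc δ k * (‖T (Q k) (Q k)‖ * δ k) ≤ 1 * Mv0 :=
              mul_le_mul h4 hin (mul_nonneg (norm_nonneg _) h5) zero_le_one
          _ = Mv0 := one_mul _
      calc ‖T (P k) (P k) + star (w k) * (T (Q k) (Q k) * w k)‖
          ≤ ‖T (P k) (P k)‖ + ‖star (w k) * (T (Q k) (Q k) * w k)‖ := norm_add_le _ _
        _ ≤ 2 * Mv0 := by linarith
    rw [hΦkk, mul_add, add_mul, re_add_q]
    have hre1 := re_sandwich_le (T (P k) (P k) + star (w k) * (T (Q k) (Q k) * w k)) c c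
    have hre2 := re_sandwich (-(2 * t k)) c
    rw [hre2]
    have hcc : ‖c‖ * ‖c‖ = ‖c‖ ^ 2 := (sq ‖c‖).symm
    nlinarith [norm_nonneg c, sq_nonneg ‖c‖]
  -- off-diagonal bounds
  set st : Fin (κ + 1) → ℝ := fun k => Real.sqrt (t k) with hstdef
  have hstnn : ∀ k, 0 ≤ st k := fun k => Real.sqrt_nonneg _
  have hstsq : ∀ k, st k ^ 2 = t k := fun k => Real.sq_sqrt (htpos k).le
  have hstA : ∀ k l, A₀ ≤ st k * st l := by
    intro k l
    have h1 : Real.sqrt A₀ ≤ st k := Real.sqrt_le_sqrt (htA k)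
    have h2 : Real.sqrt A₀ ≤ st l := Real.sqrt_le_sqrt (htA l)
    have h3 : Real.sqrt A₀ * Real.sqrt A₀ = A₀ := Real.mul_self_sqrt (by linarith)
    nlinarith [Real.sqrt_nonneg A₀]
  have honeΘ : ∀ k l, 1 / Θ ^ 2 ≤ st k * st l / Θ := by
    intro k l
    rw [div_le_div_iff₀ (by positivity) hΘpos]
    have := hstA k l
    nlinarith
  have hoffn : ∀ k l : Fin (κ + 1), (k:ℕ) < (l:ℕ) → ‖Φ l k‖ ≤ 4 * (st k * st l) / Θ := by
    intro k l hkl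
    have hkκ' := hkκ k
    have hlκ' := hkκ l
    have hνl := hνge l
    have hνk := hνge k
    have hb1 : ‖T (P l) (P k)‖ ≤ st k * st l / Θ := by
      rw [hTPP l k]
      have h := entry_le_Mv_int r hherm
        (((κ - (l:ℕ) : ℕ) : ℤ) - ((κ - (k:ℕ) : ℕ) : ℤ)) (jj l) (jj k)
      have harg : ((((κ - (l:ℕ) : ℕ) : ℤ) - ((κ - (k:ℕ) : ℕ) : ℤ))).natAbs
          = (l:ℕ) - (k:ℕ) := by omega
      rw [harg] at h
      have h2 : Mv r ((l:ℕ) - (k:ℕ)) ≤ B0 := hMvleB0 _ (by omega)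
      have h3 : B0 ≤ st k * st l / Θ := by
        rw [le_div_iff₀ hΘpos]
        have := hstA k l
        nlinarith
      linarith
    have hb2 : ‖T (P l) (Q k) * w k‖ ≤ st k * st l / Θ := by
      rw [norm_mul, hwnorm]
      have h := entry_le_Mv_int r hherm
        (((κ - (l:ℕ) : ℕ) : ℤ) - ((κ - (k:ℕ) + ν (k:ℕ) : ℕ) : ℤ)) (jj l) (ii k)
      have harg : ((((κ - (l:ℕ) : ℕ) : ℤ) - ((κ - (k:ℕ) + ν (k:ℕ) : ℕ) : ℤ))).natAbs
          = ν (k:ℕ) + ((l:ℕ) - (k:ℕ)) := by omega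
      rw [harg] at h
      have key : Mv r (ν (k:ℕ) + ((l:ℕ) - (k:ℕ))) * δ k ≤ st k * st l / Θ := by
        apply NegSqAux.le_of_sq_le_sq
        · exact mul_nonneg (Mv_nonneg r _) (hδpos k).le
        · positivity
        · have hsq : (st k * st l / Θ) ^ 2 = t k * t l / Θ ^ 2 := by
            rw [div_pow, mul_pow, hstsq, hstsq]
          have hδk : δ k = t k / Mv r (ν (k:ℕ)) := rfl
          have hMp := hMvνpos k
          have e : (Mv r (ν (k:ℕ) + ((l:ℕ) - (k:ℕ))) * δ k) ^ 2
              = (Mv r (ν (k:ℕ) + ((l:ℕ) - (k:ℕ))) ^ 2 * t k ^ 2) / Mv r (ν (k:ℕ)) ^ 2 := by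
            rw [hδk]
            field_simp
          rw [e, hsq, div_le_div_iff₀ (by positivity) (by positivity)]
          have hl1 := hlad k l hkl
          nlinarith [mul_le_mul_of_nonneg_left hl1 (htpos k).le]
      calc ‖T (P l) (Q k)‖ * δ k ≤ Mv r (ν (k:ℕ) + ((l:ℕ) - (k:ℕ))) * δ k :=
            mul_le_mul_of_nonneg_right h (hδpos k).le
        _ ≤ st k * st l / Θ := key
    have hδMv : ∀ (m : Fin (κ + 1)) (d : ℕ), d < ν (m:ℕ) → 1 ≤ ν (m:ℕ) - d →
        δ m * Mv r d ≤ 1 / Θ ^ 2 := by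
      intro m d hd hd1
      have hr := hrec m d hd
      have hC1 : (1:ℝ) ≤ Θ ^ 2 * t m := by nlinarith [htA m, hA₀1]
      have hpow : Θ ^ 2 * t m ≤ (Θ ^ 2 * t m) ^ (ν (m:ℕ) - d) :=
        le_self_pow₀ hC1 (by omega)
      have h5 : Mv r d * (Θ ^ 2 * t m) ≤ Mv r (ν (m:ℕ)) :=
        le_trans (mul_le_mul_of_nonneg_left hpow (Mv_nonneg r d)) hr
      rw [hδdef]
      rw [div_mul_eq_mul_div, div_le_div_iff₀ (hMvνpos m) (by positivity)]
      nlinarith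
    have hb3 : ‖star (w l) * T (Q l) (P k)‖ ≤ st k * st l / Θ := by
      rw [norm_mul, norm_star, hwnorm]
      have h := entry_le_Mv_int r hherm
        (((κ - (l:ℕ) + ν (l:ℕ) : ℕ) : ℤ) - ((κ - (k:ℕ) : ℕ) : ℤ)) (ii l) (jj k)
      have harg : ((((κ - (l:ℕ) + ν (l:ℕ) : ℕ) : ℤ) - ((κ - (k:ℕ) : ℕ) : ℤ))).natAbs
          = ν (l:ℕ) - ((l:ℕ) - (k:ℕ)) := by omega
      rw [harg] at h
      have h6 := hδMv l (ν (l:ℕ) - ((l:ℕ) - (k:ℕ))) (by omega) (by omega)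
      calc δ l * ‖T (Q l) (P k)‖ ≤ δ l * Mv r (ν (l:ℕ) - ((l:ℕ) - (k:ℕ))) :=
            mul_le_mul_of_nonneg_left h (hδpos l).le
        _ ≤ 1 / Θ ^ 2 := h6
        _ ≤ st k * st l / Θ := honeΘ k l
    have hb4 : ‖star (w l) * (T (Q l) (Q k) * w k)‖ ≤ st k * st l / Θ := by
      rw [norm_mul, norm_mul, norm_star, hwnorm, hwnorm]
      have hsepkl := hsep k l hkl
      have h := entry_le_Mv_int r hherm
        (((κ - (l:ℕ) + ν (l:ℕ) : ℕ) : ℤ) - ((κ - (k:ℕ) + ν (k:ℕ) : ℕ) : ℤ)) (ii l) (ii k)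
      have harg : ((((κ - (l:ℕ) + ν (l:ℕ) : ℕ) : ℤ) - ((κ - (k:ℕ) + ν (k:ℕ) : ℕ) : ℤ))).natAbs
          = ν (l:ℕ) - ν (k:ℕ) - ((l:ℕ) - (k:ℕ)) := by omega
      rw [harg] at h
      have h6 := hδMv l (ν (l:ℕ) - ν (k:ℕ) - ((l:ℕ) - (k:ℕ))) (by omega) (by omega)
      have h7 : δ l * (‖T (Q l) (Q k)‖ * δ k) ≤ δ l * Mv r (ν (l:ℕ) - ν (k:ℕ) - ((l:ℕ) - (k:ℕ))) := by
        have hTle : ‖T (Q l) (Q k)‖ * δ k ≤ Mv r (ν (l:ℕ) - ν (k:ℕ) - ((l:ℕ) - (k:ℕ))) := by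
          calc ‖T (Q l) (Q k)‖ * δ k
              ≤ Mv r (ν (l:ℕ) - ν (k:ℕ) - ((l:ℕ) - (k:ℕ))) * 1 :=
                mul_le_mul h (hδle1 k) (hδpos k).le (Mv_nonneg r _)
            _ = Mv r (ν (l:ℕ) - ν (k:ℕ) - ((l:ℕ) - (k:ℕ))) := mul_one _
        exact mul_le_mul_of_nonneg_left hTle (hδpos l).le
      calc δ l * (‖T (Q l) (Q k)‖ * δ k)
          ≤ δ l * Mv r (ν (l:ℕ) - ν (k:ℕ) - ((l:ℕ) - (k:ℕ))) := h7
        _ ≤ 1 / Θ ^ 2 := h6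
        _ ≤ st k * st l / Θ := honeΘ k l
    rw [hΦeq l k]
    have hsum4 : ‖T (P l) (P k) + T (P l) (Q k) * w k + star (w l) * T (Q l) (P k)
        + star (w l) * (T (Q l) (Q k) * w k)‖
        ≤ ‖T (P l) (P k)‖ + ‖T (P l) (Q k) * w k‖ + ‖star (w l) * T (Q l) (P k)‖
          + ‖star (w l) * (T (Q l) (Q k) * w k)‖ := by
      calc ‖T (P l) (P k) + T (P l) (Q k) * w k + star (w l) * T (Q l) (P k)
            + star (w l) * (T (Q l) (Q k) * w k)‖
          ≤ ‖T (P l) (P k) + T (P l) (Q k) * w k + star (w l) * T (Q l) (P k)‖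
            + ‖star (w l) * (T (Q l) (Q k) * w k)‖ := norm_add_le _ _
        _ ≤ ‖T (P l) (P k) + T (P l) (Q k) * w k‖ + ‖star (w l) * T (Q l) (P k)‖
            + ‖star (w l) * (T (Q l) (Q k) * w k)‖ := by
              have := norm_add_le (T (P l) (P k) + T (P l) (Q k) * w k)
                (star (w l) * T (Q l) (P k))
              linarith
        _ ≤ ‖T (P l) (P k)‖ + ‖T (P l) (Q k) * w k‖ + ‖star (w l) * T (Q l) (P k)‖
            + ‖star (w l) * (T (Q l) (Q k) * w k)‖ := by
              have := norm_add_le (T (P l) (P k)) (T (P l) (Q k) * w k)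
              linarith
    calc ‖T (P l) (P k) + T (P l) (Q k) * w k + star (w l) * T (Q l) (P k)
          + star (w l) * (T (Q l) (Q k) * w k)‖
        ≤ ‖T (P l) (P k)‖ + ‖T (P l) (Q k) * w k‖ + ‖star (w l) * T (Q l) (P k)‖
          + ‖star (w l) * (T (Q l) (Q k) * w k)‖ := hsum4
      _ ≤ 4 * (st k * st l) / Θ := by
          have hx2 : ‖T (P l) (Q k) * w k‖ = ‖T (P l) (Q k)‖ * δ k := by
            rw [norm_mul, hwnorm]
          have hx3 : ‖star (w l) * T (Q l) (P k)‖ = δ l * ‖T (Q l) (P k)‖ := by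
            rw [norm_mul, norm_star, hwnorm]
          have hx4 : ‖star (w l) * (T (Q l) (Q k) * w k)‖ = δ l * (‖T (Q l) (Q k)‖ * δ k) := by
            rw [norm_mul, norm_mul, norm_star, hwnorm, hwnorm]
          rw [hx2] at hb2
          rw [hx3] at hb3
          rw [hx4] at hb4
          rw [hx2, hx3, hx4]
          have hX : 4 * (st k * st l) / Θ = st k * st l / Θ + st k * st l / Θ
              + st k * st l / Θ + st k * st l / Θ := by ring
          linarith [hb1, hb2, hb3, hb4]
  have hoff : ∀ k l : Fin (κ + 1), k ≠ l → ‖Φ k l‖ ≤ 4 * (st k * st l) / Θ := by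
    intro k l hne
    have hvne : (k:ℕ) ≠ (l:ℕ) := fun h => hne (Fin.ext h)
    rcases Nat.lt_or_ge (k:ℕ) (l:ℕ) with h | h
    · have hsymm : Φ k l = star (Φ l k) := dot_star_symm T hTherm (x k) (x l)
      rw [hsymm, norm_star]
      exact hoffn k l h
    · have hlk : (l:ℕ) < (k:ℕ) := by omega
      calc ‖Φ k l‖ ≤ 4 * (st l * st k) / Θ := hoffn l k hlk
        _ = 4 * (st k * st l) / Θ := by ring
  -- distinctness and linear independence
  have hPQne : ∀ k l : Fin (κ + 1), P k ≠ Q l := by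
    intro k l h
    have h1 : (κ - (k:ℕ) : ℕ) = κ - (l:ℕ) + ν (l:ℕ) :=
      congrArg (fun z : Fin (N + 1) × Fin s => (z.1 : ℕ)) h
    have := hνge l
    have := hkκ k
    omega
  have hQQne : ∀ k l : Fin (κ + 1), k ≠ l → Q k ≠ Q l := by
    intro k l hne h
    have h1 : (κ - (k:ℕ) + ν (k:ℕ) : ℕ) = κ - (l:ℕ) + ν (l:ℕ) :=
      congrArg (fun z : Fin (N + 1) × Fin s => (z.1 : ℕ)) h
    have hvne : (k:ℕ) ≠ (l:ℕ) := fun hh => hne (Fin.ext hh)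
    have hk1 := hkκ k
    have hl1 := hkκ l
    rcases Nat.lt_or_ge (k:ℕ) (l:ℕ) with hlt | hge
    · have := hsep k l hlt; omega
    · have hlt : (l:ℕ) < (k:ℕ) := by omega
      have := hsep l k hlt; omega
  have hwne : ∀ k, w k ≠ 0 := by
    intro k h
    have h1 := hwnorm k
    rw [h, norm_zero] at h1
    exact absurd h1.symm (ne_of_gt (hδpos k))
  have hxval : ∀ i k : Fin (κ + 1), x i (Q k) = if i = k then w k else 0 := by
    intro i k
    simp only [hxdef]
    rw [Pi.add_apply, Pi.single_apply, Pi.single_apply]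
    rw [if_neg (fun h : Q k = P i => hPQne i k h.symm)]
    by_cases hik : i = k
    · subst hik
      rw [if_pos rfl, if_pos rfl, zero_add]
    · rw [if_neg (fun h : Q k = Q i => hQQne i k hik h.symm), if_neg hik, zero_add]
  have hlin : LinearIndependent Hqᵐᵒᵖ x := by
    rw [Fintype.linearIndependent_iff]
    intro g hg k
    have h0 := congrFun hg (Q k)
    rw [Finset.sum_apply] at h0
    have h1 : ∀ i : Fin (κ + 1), (g i • x i) (Q k)
        = (if i = k then w k * (g i).unop else 0) := by
      intro i
      rw [Pi.smul_apply, MulOpposite.smul_eq_mul_unop, hxval i k]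
      by_cases hik : i = k
      · rw [if_pos hik, if_pos hik]
      · rw [if_neg hik, if_neg hik, zero_mul]
    rw [Finset.sum_congr rfl (fun i _ => h1 i)] at h0
    rw [Finset.sum_ite_eq' Finset.univ k (fun i => w k * (g i).unop)] at h0
    rw [if_pos (Finset.mem_univ k)] at h0
    rcases mul_eq_zero.mp h0 with h | h
    · exact absurd h (hwne k)
    · exact (MulOpposite.unop_eq_zero_iff (g k)).mp h
  have hrank : Module.finrank Hqᵐᵒᵖ (Submodule.span Hqᵐᵒᵖ (Set.range x)) = κ + 1 := by
    rw [finrank_span_eq_card hlin, Fintype.card_fin]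
  -- negativity of the quadratic form on the span
  have hNegW : ∀ y ∈ Submodule.span Hqᵐᵒᵖ (Set.range x), y ≠ 0 →
      (dotProduct (star y) (T *ᵥ y)).re < 0 := by
    intro y hy hyne
    rw [Submodule.mem_span_range_iff_exists_fun] at hy
    obtain ⟨c, hc⟩ := hy
    set a : Fin (κ + 1) → Hq := fun i => (c i).unop with hadef
    have hyfun : y = fun m => ∑ i, x i m * a i := by
      funext m
      rw [← hc, Finset.sum_apply]
      exact Finset.sum_congr rfl fun i _ => rfl
    obtain ⟨k₀, hk₀⟩ : ∃ k, a k ≠ 0 := by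
      by_contra hall
      push_neg at hall
      apply hyne
      rw [hyfun]
      funext m
      simp [hall]
    set u : Fin (κ + 1) → ℝ := fun k => st k * ‖a k‖ with hudef
    have hunn : ∀ k, 0 ≤ u k := fun k => mul_nonneg (hstnn k) (norm_nonneg _)
    have hu2 : ∀ k, u k ^ 2 = t k * ‖a k‖ ^ 2 := by
      intro k
      show (st k * ‖a k‖) ^ 2 = _
      rw [mul_pow, hstsq]
    have hre : (dotProduct (star y) (T *ᵥ y)).re
        = ∑ k, ∑ l, (star (a k) * Φ k l * a l).re := by
      rw [hyfun, quad_expand T x a, re_sum_q]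
      exact Finset.sum_congr rfl fun k _ => re_sum_q _ _
    rw [hre]
    have hterm : ∀ k l : Fin (κ + 1), (star (a k) * Φ k l * a l).re
        ≤ (if k = l then 2 * Mv0 * ‖a k‖ ^ 2 - 2 * t k * ‖a k‖ ^ 2 else 0)
          + (4 / Θ) * (u k * u l) := by
      intro k l
      by_cases hkl : k = l
      · subst hkl
        rw [if_pos rfl]
        have h1 := hdiag k (a k)
        have h2 : 0 ≤ (4 / Θ) * (u k * u k) := by
          have := hunn k
          positivity
        linarith
      · rw [if_neg hkl]
        have h1 := re_sandwich_le (Φ k l) (a k) (a l)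
        have h2 := hoff k l hkl
        have hnn : 0 ≤ ‖a k‖ * ‖a l‖ := mul_nonneg (norm_nonneg _) (norm_nonneg _)
        have h3 : ‖Φ k l‖ * ‖a k‖ * ‖a l‖ ≤ (4 * (st k * st l) / Θ) * (‖a k‖ * ‖a l‖) := by
          calc ‖Φ k l‖ * ‖a k‖ * ‖a l‖ = ‖Φ k l‖ * (‖a k‖ * ‖a l‖) := by ring
            _ ≤ (4 * (st k * st l) / Θ) * (‖a k‖ * ‖a l‖) :=
                mul_le_mul_of_nonneg_right h2 hnn
        have h4 : (4 * (st k * st l) / Θ) * (‖a k‖ * ‖a l‖) = 0 + (4 / Θ) * (u k * u l) := by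
          show _ = 0 + (4 / Θ) * ((st k * ‖a k‖) * (st l * ‖a l‖))
          ring
        rw [h4] at h3
        linarith
    have hsum1 : (∑ k, ∑ l, (star (a k) * Φ k l * a l).re)
        ≤ ∑ k, ∑ l, ((if k = l then 2 * Mv0 * ‖a k‖ ^ 2 - 2 * t k * ‖a k‖ ^ 2 else 0)
          + (4 / Θ) * (u k * u l)) :=
      Finset.sum_le_sum fun k _ => Finset.sum_le_sum fun l _ => hterm k l
    have hsum2 : (∑ k, ∑ l, ((if k = l then 2 * Mv0 * ‖a k‖ ^ 2 - 2 * t k * ‖a k‖ ^ 2 else 0)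
          + (4 / Θ) * (u k * u l)))
        = (∑ k, (2 * Mv0 * ‖a k‖ ^ 2 - 2 * t k * ‖a k‖ ^ 2))
          + (4 / Θ) * ∑ k, ∑ l, u k * u l := by
      rw [Finset.sum_congr rfl (fun k (_ : k ∈ Finset.univ) => Finset.sum_add_distrib),
        Finset.sum_add_distrib]
      congr 1
      · refine Finset.sum_congr rfl fun k _ => ?_
        rw [Finset.sum_ite_eq Finset.univ k
          (fun _ => 2 * Mv0 * ‖a k‖ ^ 2 - 2 * t k * ‖a k‖ ^ 2)]
        rw [if_pos (Finset.mem_univ k)]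
      · rw [Finset.mul_sum]
        refine Finset.sum_congr rfl fun k _ => ?_
        rw [Finset.mul_sum]
    have hCS : (∑ k : Fin (κ + 1), ∑ l, u k * u l) ≤ ((κ:ℝ) + 1) * ∑ k, u k ^ 2 := by
      have h1 : ∀ k l : Fin (κ + 1), u k * u l ≤ (u k ^ 2 + u l ^ 2) / 2 := by
        intro k l
        nlinarith [sq_nonneg (u k - u l)]
      calc (∑ k : Fin (κ + 1), ∑ l, u k * u l)
          ≤ ∑ k : Fin (κ + 1), ∑ l, (u k ^ 2 + u l ^ 2) / 2 :=
            Finset.sum_le_sum fun k _ => Finset.sum_le_sum fun l _ => h1 k l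
        _ = ((κ:ℝ) + 1) * ∑ k, u k ^ 2 := by
            have h2 : ∀ k : Fin (κ + 1), (∑ l, (u k ^ 2 + u l ^ 2) / 2)
                = (((κ:ℝ) + 1) * u k ^ 2 + ∑ l, u l ^ 2) / 2 := by
              intro k
              rw [← Finset.sum_div]
              congr 1
              rw [Finset.sum_add_distrib, Finset.sum_const, Finset.card_univ, Fintype.card_fin]
              push_cast
              ring
            rw [Finset.sum_congr rfl fun k _ => h2 k, ← Finset.sum_div,
              Finset.sum_add_distrib, Finset.sum_const, Finset.card_univ, Fintype.card_fin,
              ← Finset.mul_sum, nsmul_eq_mul]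
            push_cast
            ring
    have hu2sum : (∑ k, u k ^ 2) = ∑ k : Fin (κ + 1), t k * ‖a k‖ ^ 2 :=
      Finset.sum_congr rfl fun k _ => hu2 k
    have hΘval : (4 / Θ) * (((κ:ℝ) + 1) * ∑ k, u k ^ 2)
        = (1 / 2) * ∑ k : Fin (κ + 1), t k * ‖a k‖ ^ 2 := by
      rw [hu2sum, hΘdef]
      have hne : ((κ:ℝ) + 1) ≠ 0 := by positivity
      field_simp
      ring
    have h4Θnn : (0:ℝ) ≤ 4 / Θ := by positivity
    have hmain : (4 / Θ) * (∑ k, ∑ l, u k * u l)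
        ≤ (1 / 2) * ∑ k : Fin (κ + 1), t k * ‖a k‖ ^ 2 := by
      have h5 := mul_le_mul_of_nonneg_left hCS h4Θnn
      rw [hΘval] at h5
      exact h5
    have hlast : (∑ k, (2 * Mv0 * ‖a k‖ ^ 2 - 2 * t k * ‖a k‖ ^ 2))
        + (1 / 2) * (∑ k : Fin (κ + 1), t k * ‖a k‖ ^ 2) ≤ -A₀ * ∑ k, ‖a k‖ ^ 2 := by
      have h1 : ∀ k : Fin (κ + 1), 2 * Mv0 * ‖a k‖ ^ 2 - 2 * t k * ‖a k‖ ^ 2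
          + (1 / 2) * (t k * ‖a k‖ ^ 2) ≤ -A₀ * ‖a k‖ ^ 2 := by
        intro k
        have h3 := sq_nonneg ‖a k‖
        nlinarith [mul_le_mul_of_nonneg_right (htA k) h3,
          mul_le_mul_of_nonneg_right hA₀4M h3]
      calc (∑ k, (2 * Mv0 * ‖a k‖ ^ 2 - 2 * t k * ‖a k‖ ^ 2))
            + (1 / 2) * (∑ k : Fin (κ + 1), t k * ‖a k‖ ^ 2)
          = ∑ k, (2 * Mv0 * ‖a k‖ ^ 2 - 2 * t k * ‖a k‖ ^ 2
              + (1 / 2) * (t k * ‖a k‖ ^ 2)) := by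
            rw [Finset.sum_add_distrib, Finset.mul_sum]
        _ ≤ ∑ k, -A₀ * ‖a k‖ ^ 2 := Finset.sum_le_sum fun k _ => h1 k
        _ = -A₀ * ∑ k, ‖a k‖ ^ 2 := by rw [Finset.mul_sum]
    have hpos : (0:ℝ) < ∑ k, ‖a k‖ ^ 2 := by
      refine Finset.sum_pos' (fun k _ => sq_nonneg _) ⟨k₀, Finset.mem_univ k₀, ?_⟩
      have := norm_pos_iff.mpr hk₀
      positivity
    have hA₀pos : (0:ℝ) < A₀ := by linarith
    have hneg2 : -A₀ * ∑ k, ‖a k‖ ^ 2 < 0 := by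
      have := mul_pos hA₀pos hpos
      nlinarith
    calc (∑ k, ∑ l, (star (a k) * Φ k l * a l).re)
        ≤ (∑ k, (2 * Mv0 * ‖a k‖ ^ 2 - 2 * t k * ‖a k‖ ^ 2))
          + (4 / Θ) * ∑ k, ∑ l, u k * u l := le_of_le_of_eq hsum1 hsum2
      _ ≤ (∑ k, (2 * Mv0 * ‖a k‖ ^ 2 - 2 * t k * ‖a k‖ ^ 2))
          + (1 / 2) * (∑ k : Fin (κ + 1), t k * ‖a k‖ ^ 2) := by linarith
      _ ≤ -A₀ * ∑ k, ‖a k‖ ^ 2 := hlast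
      _ < 0 := hneg2
  -- contradiction with the negative-squares bound
  have hfin := hneg N (Submodule.span Hqᵐᵒᵖ (Set.range x)) hNegW
  rw [hrank] at hfin
  omega
end
end

section
/- Let s ≥ 1 and let r : ℤ → ℍ^{s×s} satisfy r(−n) = r(n)* and ‖r(n)‖ ≤ K·C^{|n|} for all n ∈ ℤ, where K > 0 and C ≥ 1. Then for all quaternions p, q with ‖p‖ < 1/C and ‖q‖ < 1/C: the series φ(p) = r(0) + 2·∑_{n=1}^∞ pⁿ • r(n) and K_φ(p,q) = ∑_{n,m=0}^∞ pⁿ • r(n−m) • (conj q)^m converge absolutely (here pⁿ • M • (conj q)^m means each entry of M is multiplied by pⁿ on the left and by (conj q)^m on the right), and the identity K_φ(p,q) − p • K_φ(p,q) • conj(q) = (φ(p) + φ(q)*)/2 holds, where φ(q)* is the quaternionic conjugate transpose of φ(q). -/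
noncomputable section

open MeasureTheory Matrix
open scoped ComplexOrder

/-- φ(p) = r(0) + 2 ∑_{n≥1} pⁿ r(n), entrywise. -/
def phiSeq {s : ℕ} (r : ℤ → Matrix (Fin s) (Fin s) Hq) (p : Hq) :
    Matrix (Fin s) (Fin s) Hq :=
  Matrix.of fun i j => r 0 i j + 2 * ∑' n : ℕ, p ^ (n + 1) * r ((n : ℤ) + 1) i j

/-- K_φ(p,q) = ∑_{n,m≥0} pⁿ r(n−m) (conj q)ᵐ, entrywise. -/
def kerSeq {s : ℕ} (r : ℤ → Matrix (Fin s) (Fin s) Hq) (p q : Hq) :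
    Matrix (Fin s) (Fin s) Hq :=
  Matrix.of fun i j =>
    ∑' nm : ℕ × ℕ, p ^ nm.1 * r ((nm.1 : ℤ) - (nm.2 : ℤ)) i j * (star q) ^ nm.2

/-- convergence of φ and K_φ and the fundamental identity. -/
theorem kernel_identity {s : ℕ} (hs : 1 ≤ s)
    (r : ℤ → Matrix (Fin s) (Fin s) Hq)
    (hherm : ∀ n : ℤ, r (-n) = (r n).conjTranspose)
    (K C : ℝ) (hK : 0 < K) (hC : 1 ≤ C)
    (hbd : ∀ n : ℤ, ∀ i j, ‖r n i j‖ ≤ K * C ^ n.natAbs) :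
    ∀ p q : Hq, ‖p‖ < 1/C → ‖q‖ < 1/C →
      (∀ i j, Summable fun n : ℕ => ‖p ^ (n + 1) * r ((n : ℤ) + 1) i j‖) ∧
      (∀ i j, Summable fun nm : ℕ × ℕ =>
          ‖p ^ nm.1 * r ((nm.1 : ℤ) - (nm.2 : ℤ)) i j * (star q) ^ nm.2‖) ∧
      (∀ i j, kerSeq r p q i j - p * kerSeq r p q i j * star q =
          (phiSeq r p i j + (phiSeq r q).conjTranspose i j) / 2) := by
  have hC0 : (0:ℝ) < C := lt_of_lt_of_le one_pos hC
  have claim1 : ∀ x : Hq, ‖x‖ < 1/C → ∀ i j,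
      Summable fun n : ℕ => ‖x ^ (n + 1) * r ((n : ℤ) + 1) i j‖ := by
    intro x hx i j
    have hc1 : ‖x‖ * C < 1 := (lt_div_iff₀ hC0).mp hx
    have hc0 : (0:ℝ) ≤ ‖x‖ * C := by positivity
    apply Summable.of_nonneg_of_le (fun n => norm_nonneg _)
      (f := fun n : ℕ => (K * (‖x‖ * C)) * (‖x‖ * C) ^ n)
    · intro n
      rw [norm_mul, norm_pow]
      calc ‖x‖ ^ (n+1) * ‖r ((n:ℤ)+1) i j‖
          ≤ ‖x‖ ^ (n+1) * (K * C ^ (n+1)) := by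
            refine mul_le_mul_of_nonneg_left ?_ (by positivity)
            have h := hbd ((n:ℤ)+1) i j
            rwa [show (((n:ℤ)+1)).natAbs = n + 1 by omega] at h
        _ = (K * (‖x‖ * C)) * (‖x‖ * C) ^ n := by rw [mul_pow]; ring
    · exact (summable_geometric_of_lt_one hc0 hc1).mul_left _
  intro p q hp hq
  have hp1 : ‖p‖ * C < 1 := (lt_div_iff₀ hC0).mp hp
  have hq1 : ‖q‖ * C < 1 := (lt_div_iff₀ hC0).mp hq
  have claim2 : ∀ i j, Summable fun nm : ℕ × ℕ =>
      ‖p ^ nm.1 * r ((nm.1 : ℤ) - (nm.2 : ℤ)) i j * (star q) ^ nm.2‖ := by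
    intro i j
    apply Summable.of_nonneg_of_le (fun nm => norm_nonneg _)
      (f := fun nm : ℕ × ℕ => K * ((‖p‖*C) ^ nm.1 * (‖q‖*C) ^ nm.2))
    · rintro ⟨n, m⟩
      rw [norm_mul, norm_mul, norm_pow, norm_pow, norm_star]
      calc ‖p‖ ^ n * ‖r ((n:ℤ) - m) i j‖ * ‖q‖ ^ m
          ≤ ‖p‖ ^ n * (K * C ^ (n + m)) * ‖q‖ ^ m := by
            have h1 : ‖r ((n:ℤ) - m) i j‖ ≤ K * C ^ (n + m) := by
              refine (hbd _ i j).trans ?_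
              have hle : ((n:ℤ) - m).natAbs ≤ n + m := by omega
              exact mul_le_mul_of_nonneg_left (pow_le_pow_right₀ hC hle) hK.le
            exact mul_le_mul_of_nonneg_right
              (mul_le_mul_of_nonneg_left h1 (by positivity)) (by positivity)
        _ = K * ((‖p‖*C) ^ n * (‖q‖*C) ^ m) := by rw [pow_add, mul_pow, mul_pow]; ring
    · exact ((summable_geometric_of_lt_one (by positivity) hp1).mul_of_nonneg
        (summable_geometric_of_lt_one (by positivity) hq1)
        (fun n => by positivity) (fun m => by positivity)).mul_left K
  refine ⟨claim1 p hp, claim2, ?_⟩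
  intro i j
  set f : ℕ × ℕ → Hq :=
    fun nm => p ^ nm.1 * r ((nm.1 : ℤ) - (nm.2 : ℤ)) i j * (star q) ^ nm.2 with hf
  have hfs : Summable f := (claim2 i j).of_norm
  have hinj1 : Function.Injective (fun m : ℕ => ((0:ℕ), m)) := fun a b h => by simpa using h
  have hinj2 : Function.Injective (fun n : ℕ => (n+1, (0:ℕ))) := fun a b h => by simpa using h
  have hinj3 : Function.Injective (fun nm : ℕ × ℕ => (nm.1+1, nm.2+1)) := by
    rintro ⟨a,b⟩ ⟨c,d⟩ h
    simp only [Prod.mk.injEq] at h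
    exact Prod.ext (by omega) (by omega)
  have hrow : Summable fun m : ℕ => f (0, m) := hfs.comp_injective hinj1
  have hcol : Summable fun n : ℕ => f (n+1, 0) := hfs.comp_injective hinj2
  have hshift : Summable fun nm : ℕ × ℕ => f (nm.1+1, nm.2+1) := hfs.comp_injective hinj3
  have hmul : ∀ nm : ℕ × ℕ, p * f nm * star q = f (nm.1+1, nm.2+1) := by
    rintro ⟨n, m⟩
    simp only [hf]
    rw [show ((n+1:ℕ):ℤ) - ((m+1:ℕ):ℤ) = (n:ℤ) - m by push_cast; ring]
    rw [pow_succ' p n, pow_succ (star q) m]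
    simp only [mul_assoc]
  have hsum_g : Summable (fun n : ℕ => ∑' m : ℕ, f (n, m)) :=
    ⟨_, hfs.hasSum.prod_fiberwise (fun n => (hfs.prod_factor n).hasSum)⟩
  have hsum_g' : Summable (fun n : ℕ => ∑' m : ℕ, f (n+1, m+1)) :=
    ⟨_, hshift.hasSum.prod_fiberwise (fun n => (hshift.prod_factor n).hasSum)⟩
  have hT : (∑' nm : ℕ × ℕ, f nm)
      = f (0,0) + (∑' m : ℕ, f (0, m+1))
        + ((∑' n : ℕ, f (n+1, 0)) + ∑' nm : ℕ × ℕ, f (nm.1+1, nm.2+1)) := by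
    rw [Summable.tsum_prod' hfs (fun n => hfs.prod_factor n)]
    rw [Summable.tsum_eq_zero_add hsum_g]
    congr 1
    · exact Summable.tsum_eq_zero_add hrow
    · calc (∑' n : ℕ, ∑' m : ℕ, f (n+1, m))
          = ∑' n : ℕ, (f (n+1,0) + ∑' m : ℕ, f (n+1, m+1)) :=
            tsum_congr fun n => Summable.tsum_eq_zero_add (hfs.prod_factor (n+1))
        _ = (∑' n : ℕ, f (n+1,0)) + ∑' n : ℕ, ∑' m : ℕ, f (n+1, m+1) :=
            Summable.tsum_add hcol hsum_g'
        _ = (∑' n : ℕ, f (n+1,0)) + ∑' nm : ℕ × ℕ, f (nm.1+1, nm.2+1) := by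
            rw [Summable.tsum_prod' hshift (fun n => hshift.prod_factor n)]
  have hPK : p * (∑' nm : ℕ × ℕ, f nm) * star q = ∑' nm : ℕ × ℕ, f (nm.1+1, nm.2+1) := by
    rw [← tsum_mul_left, ← tsum_mul_right]
    exact tsum_congr hmul
  have hker : kerSeq r p q i j = ∑' nm : ℕ × ℕ, f nm := rfl
  have hf00 : f (0, 0) = r 0 i j := by
    simp only [hf]
    norm_num
  have hSp : (∑' n : ℕ, p ^ (n+1) * r ((n:ℤ)+1) i j) = ∑' n : ℕ, f (n+1, 0) := by
    refine tsum_congr fun n => ?_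
    simp only [hf]
    rw [show ((n+1:ℕ):ℤ) - ((0:ℕ):ℤ) = (n:ℤ) + 1 by push_cast; ring, pow_zero, mul_one]
  have h0 : star (r 0 j i) = r 0 i j := by
    have h := congrFun (congrFun (hherm 0) i) j
    simp only [neg_zero, Matrix.conjTranspose_apply] at h
    exact h.symm
  have hterm : ∀ m : ℕ, star (q ^ (m+1) * r ((m:ℤ)+1) j i) = f (0, m+1) := by
    intro m
    rw [StarMul.star_mul, star_pow]
    have hs1 : star (r ((m:ℤ)+1) j i) = r (-((m:ℤ)+1)) i j := by
      have h := congrFun (congrFun (hherm ((m:ℤ)+1)) i) j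
      simp only [Matrix.conjTranspose_apply] at h
      exact h.symm
    rw [hs1]
    simp only [hf]
    rw [show ((0:ℕ):ℤ) - ((m+1:ℕ):ℤ) = -((m:ℤ)+1) by push_cast; ring, pow_zero, one_mul]
  have hphiq : (phiSeq r q).conjTranspose i j
      = r 0 i j + (∑' m : ℕ, f (0, m+1)) * 2 := by
    rw [Matrix.conjTranspose_apply]
    show star (r 0 j i + 2 * ∑' m : ℕ, q ^ (m+1) * r ((m:ℤ)+1) j i) = _
    rw [star_add, StarMul.star_mul, tsum_star, h0, tsum_congr hterm,
      show (star 2 : Hq) = 2 by simp]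
  show (∑' nm : ℕ × ℕ, f nm) - p * (∑' nm : ℕ × ℕ, f nm) * star q
      = (phiSeq r p i j + (phiSeq r q).conjTranspose i j) / 2
  rw [hPK, hphiq]
  show _ = ((r 0 i j + 2 * ∑' n : ℕ, p ^ (n+1) * r ((n:ℤ)+1) i j) + _) / 2
  rw [hSp, hT]
  have h2 : (2:Hq) ≠ 0 := by
    intro h
    have h3 : ((2:ℝ) : Hq) = ((0:ℝ) : Hq) := by push_cast; exact h
    rw [Quaternion.coe_inj] at h3
    norm_num at h3
  rw [eq_div_iff h2, hf00]
  simp only [mul_two, two_mul]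
  abel
end
end

section
/- Let s ≥ 1 and let r : ℤ → ℍ^{s×s} satisfy r(−n) = r(n)* and ‖r(n)‖ ≤ K·C^{|n|} for all n ∈ ℤ, where K > 0 and C ≥ 1. Define, for ‖p‖, ‖q‖ < 1/C, φ(p) = r(0) + 2·∑_{n=1}^∞ pⁿ • r(n) and K_φ(p,q) = ∑_{n,m=0}^∞ pⁿ • r(n−m) • (conj q)^m. Then for all p, q with ‖p‖ < min(1, 1/C) and ‖q‖ < min(1, 1/C): K_φ(p,q) = ∑_{n=0}^∞ pⁿ • ((φ(p) + φ(q)*)/2) • (conj q)ⁿ, where φ(q)* is the quaternionic conjugate transpose and pⁿ • M • (conj q)ⁿ means each entry of M is multiplied by pⁿ on the left and by (conj q)ⁿ on the right. -/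
noncomputable section

open MeasureTheory Matrix
open scoped ComplexOrder

/-- The lower-triangle set of the quadrant. -/
def trig : Set (ℕ × ℕ) := {x | x.2 ≤ x.1}

def lowEquiv : ℕ × ℕ ≃ ↥trig where
  toFun x := ⟨(x.1 + x.2, x.1), by simp [trig]⟩
  invFun y := (y.1.2, y.1.1 - y.1.2)
  left_inv x := by obtain ⟨m, k⟩ := x; simp
  right_inv y := by
    obtain ⟨⟨n, m⟩, h⟩ := y
    simp only [trig, Set.mem_setOf_eq] at h
    apply Subtype.ext
    show (m + (n - m), m) = (n, m)
    rw [Nat.add_sub_cancel' h]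

def upEquiv : ℕ × ℕ ≃ ↥trigᶜ where
  toFun x := ⟨(x.1, x.1 + x.2 + 1),
    by simp only [trig, Set.mem_compl_iff, Set.mem_setOf_eq]; omega⟩
  invFun y := (y.1.1, y.1.2 - y.1.1 - 1)
  left_inv x := by
    obtain ⟨n, k⟩ := x
    show (n, n + k + 1 - n - 1) = (n, k)
    rw [show n + k + 1 - n - 1 = k from by omega]
  right_inv y := by
    obtain ⟨⟨n, m⟩, h⟩ := y
    simp only [trig, Set.mem_compl_iff, Set.mem_setOf_eq, not_le] at h
    apply Subtype.ext
    show (n, n + (m - n - 1) + 1) = (n, m)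
    rw [show n + (m - n - 1) + 1 = m from by omega]

/-- K_φ(p,q) = ∑_{n≥0} pⁿ ((φ(p)+φ(q)*)/2) (conj q)ⁿ. -/
theorem kernel_series_representation {s : ℕ} (hs : 1 ≤ s)
    (r : ℤ → Matrix (Fin s) (Fin s) Hq)
    (hherm : ∀ n : ℤ, r (-n) = (r n).conjTranspose)
    (K C : ℝ) (hK : 0 < K) (hC : 1 ≤ C)
    (hbd : ∀ n : ℤ, ∀ i j, ‖r n i j‖ ≤ K * C ^ n.natAbs) :
    ∀ p q : Hq, ‖p‖ < min 1 (1/C) → ‖q‖ < min 1 (1/C) →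
      ∀ i j, kerSeq r p q i j =
        ∑' n : ℕ, p ^ n *
          ((phiSeq r p i j + (phiSeq r q).conjTranspose i j) / 2) * (star q) ^ n := by
  intro p q hp hq i j
  have hC0 : (0:ℝ) < C := lt_of_lt_of_le one_pos hC
  have hp1 : ‖p‖ < 1 := hp.trans_le (min_le_left _ _)
  have hq1 : ‖q‖ < 1 := hq.trans_le (min_le_left _ _)
  have haC : ‖p‖ * C < 1 := (lt_div_iff₀ hC0).mp (hp.trans_le (min_le_right _ _))
  have hbC : ‖q‖ * C < 1 := (lt_div_iff₀ hC0).mp (hq.trans_le (min_le_right _ _))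
  set a : ℝ := ‖p‖ * C with ha_def
  set b : ℝ := ‖q‖ * C with hb_def
  have ha0 : 0 ≤ a := by positivity
  have hb0 : 0 ≤ b := by positivity
  -- the universal norm bound
  have key : ∀ (z : ℤ) (n m : ℕ), z.natAbs ≤ n + m →
      ‖p ^ n * r z i j * (star q) ^ m‖ ≤ K * (a ^ n * b ^ m) := by
    intro z n m hz
    rw [norm_mul, norm_mul, norm_pow, norm_pow, norm_star]
    have h1 : ‖r z i j‖ ≤ K * C ^ (n + m) := by
      refine (hbd z i j).trans ?_
      have h2 : C ^ z.natAbs ≤ C ^ (n + m) := pow_le_pow_right₀ hC hz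
      nlinarith
    calc ‖p‖ ^ n * ‖r z i j‖ * ‖q‖ ^ m
        ≤ ‖p‖ ^ n * (K * C ^ (n + m)) * ‖q‖ ^ m := by
          gcongr
      _ = K * (a ^ n * b ^ m) := by
          simp only [ha_def, hb_def, mul_pow, pow_add]; ring
  set f : ℕ × ℕ → Hq :=
    fun nm => p ^ nm.1 * r ((nm.1 : ℤ) - (nm.2 : ℤ)) i j * (star q) ^ nm.2 with hf_def
  have hgeoa : Summable fun n : ℕ => a ^ n := summable_geometric_of_lt_one ha0 haC
  have hgeob : Summable fun n : ℕ => b ^ n := summable_geometric_of_lt_one hb0 hbC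
  have hgeoKab : Summable fun nm : ℕ × ℕ => K * (a ^ nm.1 * b ^ nm.2) :=
    (hgeoa.mul_of_nonneg hgeob (fun n => pow_nonneg ha0 n)
      (fun m => pow_nonneg hb0 m)).mul_left K
  have hu : Summable f := by
    refine Summable.of_norm_bounded hgeoKab fun nm => key _ nm.1 nm.2 ?_
    have := Int.natAbs_sub_le (nm.1 : ℤ) (nm.2 : ℤ)
    simpa using this
  -- the two series Φ and Ψ
  set Φ : Hq := ∑' k : ℕ, p ^ k * r (k : ℤ) i j with hΦ_def
  set Ψ : Hq := ∑' k : ℕ, r (-(k : ℤ) - 1) i j * (star q) ^ (k + 1) with hΨ_def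
  have hΦsum : Summable fun k : ℕ => p ^ k * r (k : ℤ) i j := by
    refine Summable.of_norm_bounded (hgeoa.mul_left K) fun k => ?_
    have := key (k : ℤ) k 0 (by simp)
    simpa using this
  have hΨsum : Summable fun k : ℕ => r (-(k : ℤ) - 1) i j * (star q) ^ (k + 1) := by
    refine Summable.of_norm_bounded
      ((hgeob.comp_injective Nat.succ_injective).mul_left K) fun k => ?_
    have := key (-(k : ℤ) - 1) 0 (k + 1) (by omega)
    simpa using this
  -- summability of the diagonal-type series
  have hdiag : ∀ X : Hq, Summable fun n : ℕ => p ^ n * X * (star q) ^ n := by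
    intro X
    have hpq : ‖p‖ * ‖q‖ < 1 := by nlinarith [norm_nonneg p, norm_nonneg q]
    refine Summable.of_norm_bounded (g := fun n => ‖X‖ * (‖p‖ * ‖q‖) ^ n)
      ((summable_geometric_of_lt_one (by positivity) hpq).mul_left _) fun n => ?_
    refine le_of_eq ?_
    show ‖p ^ n * X * star q ^ n‖ = ‖X‖ * (‖p‖ * ‖q‖) ^ n
    rw [norm_mul, norm_mul, norm_pow, norm_pow, norm_star, mul_pow]
    ring
  -- restricting to the two triangles
  have hs1 : Summable (f ∘ ((↑) : ↥trig → ℕ × ℕ)) := hu.subtype trig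
  have hs2 : Summable (f ∘ ((↑) : ↥trigᶜ → ℕ × ℕ)) := hu.subtype trigᶜ
  -- lower triangle sum
  have hlow : (∑' x : ↥trig, f x) = ∑' m : ℕ, p ^ m * Φ * (star q) ^ m := by
    rw [← lowEquiv.tsum_eq (fun x : ↥trig => f x)]
    have hsum1 : Summable fun x : ℕ × ℕ => f (lowEquiv x) :=
      (lowEquiv.summable_iff (f := fun x : ↥trig => f x)).2 hs1
    rw [Summable.tsum_prod' hsum1 (fun m => hsum1.comp_injective
      (fun k1 k2 h => by simpa using congrArg Prod.snd h))]
    refine tsum_congr fun m => ?_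
    have hterm : ∀ k : ℕ, f (lowEquiv (m, k)) = p ^ m * (p ^ k * r (k : ℤ) i j) * (star q) ^ m := by
      intro k
      show p ^ (m + k) * r (((m + k : ℕ) : ℤ) - (m : ℤ)) i j * (star q) ^ m = _
      have harg : ((m + k : ℕ) : ℤ) - (m : ℤ) = (k : ℤ) := by push_cast; ring
      rw [harg, pow_add, mul_assoc (p ^ m)]
    simp only [hterm]
    rw [tsum_mul_right, tsum_mul_left]
  -- upper triangle sum
  have hupp : (∑' x : ↥trigᶜ, f x) = ∑' n : ℕ, p ^ n * Ψ * (star q) ^ n := by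
    rw [← upEquiv.tsum_eq (fun x : ↥trigᶜ => f x)]
    have hsum2 : Summable fun x : ℕ × ℕ => f (upEquiv x) :=
      (upEquiv.summable_iff (f := fun x : ↥trigᶜ => f x)).2 hs2
    rw [Summable.tsum_prod' hsum2 (fun n => hsum2.comp_injective
      (fun k1 k2 h => by simpa using congrArg Prod.snd h))]
    refine tsum_congr fun n => ?_
    have hterm : ∀ k : ℕ, f (upEquiv (n, k)) =
        p ^ n * (r (-(k : ℤ) - 1) i j * (star q) ^ (k + 1)) * (star q) ^ n := by
      intro k
      show p ^ n * r ((n : ℤ) - ((n + k + 1 : ℕ) : ℤ)) i j * (star q) ^ (n + k + 1) = _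
      have harg : (n : ℤ) - ((n + k + 1 : ℕ) : ℤ) = -(k : ℤ) - 1 := by push_cast; ring
      rw [harg, show n + k + 1 = (k + 1) + n from by omega, pow_add]
      rw [← mul_assoc, mul_assoc (p ^ n)]
    simp only [hterm]
    rw [tsum_mul_right, tsum_mul_left]
  -- the middle factor
  have h2ne : (2 : Hq) ≠ 0 := by
    have : CharZero Hq := charZero_of_injective_algebraMap (algebraMap ℝ Hq).injective
    exact two_ne_zero
  have hΦeq : Φ = r 0 i j + ∑' n : ℕ, p ^ (n + 1) * r ((n : ℤ) + 1) i j := by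
    rw [hΦ_def, Summable.tsum_eq_zero_add hΦsum]
    simp only [pow_zero, one_mul, Nat.cast_zero]
    congr 1
  have hstar : (phiSeq r q).conjTranspose i j = r 0 i j + 2 * Ψ := by
    simp only [Matrix.conjTranspose_apply, phiSeq, Matrix.of_apply]
    rw [star_add, StarMul.star_mul]
    have h0 : star (r 0 j i) = r 0 i j := by
      have := hherm 0
      rw [neg_zero] at this
      rw [show r 0 i j = (r 0).conjTranspose i j from by rw [← this]]
      rfl
    rw [h0, star_ofNat]
    congr 1
    have hT : star (∑' n : ℕ, q ^ (n + 1) * r ((n : ℤ) + 1) j i) = Ψ := by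
      rw [tsum_star, hΨ_def]
      refine tsum_congr fun n => ?_
      rw [StarMul.star_mul, star_pow]
      congr 1
      have := hherm ((n : ℤ) + 1)
      rw [show -(n : ℤ) - 1 = -((n : ℤ) + 1) from by ring, this]
      rfl
    rw [hT, mul_two, ← two_mul]
  have hmid : (phiSeq r p i j + (phiSeq r q).conjTranspose i j) / 2 = Φ + Ψ := by
    rw [hstar, show phiSeq r p i j =
      r 0 i j + 2 * ∑' n : ℕ, p ^ (n + 1) * r ((n : ℤ) + 1) i j from rfl, div_eq_iff h2ne,
      hΦeq]
    simp only [two_mul, add_mul, mul_two]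
    abel
  -- assemble
  rw [hmid]
  show (∑' nm : ℕ × ℕ, f nm) = _
  rw [← Summable.tsum_add_tsum_compl (s := trig) hs1 hs2, hlow, hupp,
    ← Summable.tsum_add (hdiag Φ) (hdiag Ψ)]
  exact tsum_congr fun n => by rw [mul_add, add_mul]
end
end

section
/- Let s ≥ 1, κ ≥ 0, and let r : ℤ → ℍ^{s×s} be Hermitian (r(−n) = r(n)*) with at most κ negative squares, and assume ‖r(n)‖ ≤ K·C^{|n|} for all n with K > 0, C ≥ 1. Define K_φ(p,q) = ∑_{n,m=0}^∞ pⁿ • r(n−m) • (conj q)^m for ‖p‖, ‖q‖ < min(1, 1/C). Then for any finitely many points p₁,…,p_m with ‖p_a‖ < min(1, 1/C), the block matrix M = (K_φ(p_a, p_b))_{a,b=1}^{m} ∈ ℍ^{ms×ms} satisfies M* = M, and every right ℍ-submodule W of ℍ^{ms} such that re(star x ⬝ᵥ (M *ᵥ x)) < 0 for all nonzero x ∈ W has dimension at most κ over ℍ. -/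
noncomputable section

open MeasureTheory Matrix
open scoped ComplexOrder

/- ### Auxiliary lemmas -/

lemma hq_abs_re_le_norm (q : Hq) : |q.re| ≤ ‖q‖ := by
  have h : q.re ^ 2 ≤ ‖q‖ ^ 2 := by
    rw [sq, sq, ← Quaternion.normSq_eq_norm_mul_self, Quaternion.normSq_def']
    nlinarith [sq_nonneg q.imI, sq_nonneg q.imJ, sq_nonneg q.imK]
  exact abs_le.mpr (abs_le_of_sq_le_sq' h (norm_nonneg q))

lemma hq_star_smul (c : ℝ) (a : Hq) : star (c • a) = c • star a := by
  ext <;> simp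

lemma hq_form_smul {ι : Type*} [Fintype ι] (A : Matrix ι ι Hq) (c : ℝ) (x : ι → Hq) :
    dotProduct (star (c • x)) (A.mulVec (c • x))
      = (c * c) • dotProduct (star x) (A.mulVec x) := by
  simp only [dotProduct, Matrix.mulVec, Pi.star_apply, Pi.smul_apply, star_smul,
    star_trivial]
  rw [Finset.smul_sum]
  refine Finset.sum_congr rfl fun u _ => ?_
  rw [Finset.mul_sum, Finset.mul_sum, Finset.smul_sum]
  refine Finset.sum_congr rfl fun v _ => ?_
  rw [hq_star_smul, mul_smul_comm, smul_mul_assoc, mul_smul_comm, smul_smul]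

lemma hq_form_norm_le {ι : Type*} [Fintype ι] (A : Matrix ι ι Hq) (x : ι → Hq) (t : ℝ)
    (ht : ∀ u v, ‖A u v‖ ≤ t) :
    ‖dotProduct (star x) (A.mulVec x)‖ ≤ t * (∑ u, ‖x u‖) ^ 2 := by
  have h1 : ‖dotProduct (star x) (A.mulVec x)‖
      ≤ ∑ u, ‖x u‖ * ∑ v, t * ‖x v‖ := by
    refine le_trans (norm_sum_le _ _) (Finset.sum_le_sum fun u _ => ?_)
    rw [Pi.star_apply, norm_mul, norm_star]
    refine mul_le_mul_of_nonneg_left ?_ (norm_nonneg _)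
    refine le_trans (norm_sum_le _ _) (Finset.sum_le_sum fun v _ => ?_)
    rw [norm_mul]
    exact mul_le_mul_of_nonneg_right (ht u v) (norm_nonneg _)
  calc ‖dotProduct (star x) (A.mulVec x)‖ ≤ ∑ u, ‖x u‖ * ∑ v, t * ‖x v‖ := h1
    _ = t * (∑ u, ‖x u‖) ^ 2 := by rw [← Finset.mul_sum, ← Finset.sum_mul]; ring

lemma hq_form_continuous {ι : Type*} [Fintype ι] (A : Matrix ι ι Hq) :
    Continuous fun x : ι → Hq => (dotProduct (star x) (A.mulVec x)).re := by
  refine Quaternion.continuous_re.comp ?_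
  show Continuous fun x : ι → Hq => ∑ u, star (x u) * ∑ v, A u v * x v
  exact continuous_finset_sum _ fun u _ =>
    (continuous_star.comp (continuous_apply u)).mul
      (continuous_finset_sum _ fun v _ => continuous_const.mul (continuous_apply v))

set_option maxHeartbeats 1600000 in
/-- the kernel K_φ has at most κ negative squares. -/
theorem kernel_negSquares {s : ℕ} (hs : 1 ≤ s) (κ : ℕ)
    (r : ℤ → Matrix (Fin s) (Fin s) Hq)
    (hherm : ∀ n : ℤ, r (-n) = (r n).conjTranspose)
    (hneg : HasAtMostNegSquares r κ)
    (K C : ℝ) (hK : 0 < K) (hC : 1 ≤ C)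
    (hbd : ∀ n : ℤ, ∀ i j, ‖r n i j‖ ≤ K * C ^ n.natAbs)
    (m : ℕ) (p : Fin m → Hq) (hp : ∀ a, ‖p a‖ < min 1 (1/C)) :
    letI M : Matrix (Fin m × Fin s) (Fin m × Fin s) Hq :=
      Matrix.of fun u v => kerSeq r (p u.1) (p v.1) u.2 v.2
    M.conjTranspose = M ∧
      ∀ W : Submodule Hqᵐᵒᵖ (Fin m × Fin s → Hq),
        (∀ x ∈ W, x ≠ 0 → (dotProduct (star x) (M.mulVec x)).re < 0) →
        Module.finrank Hqᵐᵒᵖ W ≤ κ := by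
  set M : Matrix (Fin m × Fin s) (Fin m × Fin s) Hq :=
    Matrix.of fun u v => kerSeq r (p u.1) (p v.1) u.2 v.2 with hMdef
  have hCpos : (0:ℝ) < C := lt_of_lt_of_le one_pos hC
  -- the elementary term function
  set f : Fin m → Fin m → Fin s → Fin s → ℕ × ℕ → Hq := fun a b i j nm =>
    p a ^ nm.1 * r ((nm.1 : ℤ) - (nm.2 : ℤ)) i j * (star (p b)) ^ nm.2 with hf
  have hM : ∀ u v : Fin m × Fin s, M u v = ∑' nm : ℕ × ℕ, f u.1 v.1 u.2 v.2 nm := fun u v => rfl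
  -- dispose of the trivial case m = 0
  rcases Nat.eq_zero_or_pos m with hm0 | hmpos
  · subst hm0
    constructor
    · ext u v <;> exact u.1.elim0
    · intro W hW
      have : W = ⊥ := by
        rw [eq_bot_iff]; intro x hx
        have : x = 0 := funext fun u => absurd u.1.2 (by omega)
        simp [this]
      rw [this]; simp
  have : Nonempty (Fin m) := ⟨⟨0, hmpos⟩⟩
  -- the uniform bound ρ on the norms
  obtain ⟨a₀⟩ := this
  set ρ : ℝ := Finset.univ.sup' ⟨a₀, Finset.mem_univ a₀⟩ (fun a => ‖p a‖) with hρdef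
  have hρ : ∀ a, ‖p a‖ ≤ ρ := fun a => Finset.le_sup' (fun a => ‖p a‖) (Finset.mem_univ a)
  have hρlt : ρ < min 1 (1/C) := by
    rw [hρdef]; exact (Finset.sup'_lt_iff _).2 fun a _ => hp a
  have hρ0 : 0 ≤ ρ := le_trans (norm_nonneg _) (hρ a₀)
  set t : ℝ := C * ρ with htdef
  have ht0 : 0 ≤ t := mul_nonneg (le_of_lt hCpos) hρ0
  have ht1 : t < 1 := by
    have h2 : ρ < 1 / C := lt_of_lt_of_le hρlt (min_le_right _ _)
    rw [htdef]
    calc C * ρ < C * (1 / C) := by exact mul_lt_mul_of_pos_left h2 hCpos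
      _ = 1 := by field_simp
  set maj : ℕ × ℕ → ℝ := fun nm => K * (t ^ nm.1 * t ^ nm.2) with hmajdef
  have hmaj0 : ∀ nm, 0 ≤ maj nm := fun nm =>
    mul_nonneg hK.le (mul_nonneg (pow_nonneg ht0 _) (pow_nonneg ht0 _))
  have hmaj_summable : Summable maj :=
    ((summable_geometric_of_lt_one ht0 ht1).mul_of_nonneg
      (summable_geometric_of_lt_one ht0 ht1) (fun n => pow_nonneg ht0 n)
      (fun n => pow_nonneg ht0 n)).mul_left K
  -- term bound
  have hb : ∀ (a b : Fin m) (i j : Fin s) (nm : ℕ × ℕ), ‖f a b i j nm‖ ≤ maj nm := by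
    intro a b i j nm
    have habs : ((nm.1 : ℤ) - (nm.2 : ℤ)).natAbs ≤ nm.1 + nm.2 := by omega
    have h1 : ‖r ((nm.1 : ℤ) - (nm.2 : ℤ)) i j‖ ≤ K * C ^ (nm.1 + nm.2) := by
      refine le_trans (hbd _ i j) ?_
      exact mul_le_mul_of_nonneg_left (pow_le_pow_right₀ hC habs) hK.le
    calc ‖f a b i j nm‖
        = ‖p a‖ ^ nm.1 * ‖r ((nm.1 : ℤ) - (nm.2 : ℤ)) i j‖ * ‖p b‖ ^ nm.2 := by
          rw [hf]; dsimp only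
          rw [norm_mul, norm_mul, norm_pow, norm_pow, Quaternion.norm_star]
      _ ≤ ρ ^ nm.1 * (K * C ^ (nm.1 + nm.2)) * ρ ^ nm.2 := by
          gcongr
          all_goals first
            | exact hρ0
            | exact hρ a
            | exact hρ b
            | exact h1
            | positivity
      _ = maj nm := by
          rw [hmajdef]; dsimp only; rw [htdef]
          simp only [mul_pow, pow_add]; ring
  have hfs : ∀ a b i j, Summable (f a b i j) := fun a b i j =>
    Summable.of_norm_bounded hmaj_summable (hb a b i j)
  -- Hermitian
  have hr : ∀ (k : ℤ) (i j : Fin s), star (r k i j) = r (-k) j i := by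
    intro k i j; rw [hherm k, Matrix.conjTranspose_apply]
  have hherm' : M.conjTranspose = M := by
    refine Matrix.ext fun u v => ?_
    rw [Matrix.conjTranspose_apply, hM, hM, tsum_star,
      ← Equiv.tsum_eq (Equiv.prodComm ℕ ℕ)]
    refine tsum_congr fun nm => ?_
    rw [hf]; dsimp only [Equiv.prodComm_apply, Prod.fst_swap, Prod.snd_swap]
    rw [StarMul.star_mul, StarMul.star_mul, star_pow, star_pow, star_star, hr, neg_sub, mul_assoc]
  refine ⟨hherm', ?_⟩
  -- truncations
  set box : ℕ → Finset (ℕ × ℕ) := fun N => Finset.range (N+1) ×ˢ Finset.range (N+1) with hboxdef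
  set MN : (N : ℕ) → Matrix (Fin m × Fin s) (Fin m × Fin s) Hq := fun N =>
    Matrix.of fun u v => ∑ nm ∈ box N, f u.1 v.1 u.2 v.2 nm with hMNdef
  set tail : ℕ → ℝ := fun N => ∑' x : {nm : ℕ × ℕ // nm ∉ box N}, maj x with htaildef
  have htail0 : ∀ N, 0 ≤ tail N := fun N => tsum_nonneg fun x => hmaj0 x
  have hMdiff : ∀ N u v, ‖M u v - MN N u v‖ ≤ tail N := by
    intro N u v
    have hsum := hfs u.1 v.1 u.2 v.2
    have hnorm : Summable fun nm => ‖f u.1 v.1 u.2 v.2 nm‖ :=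
      Summable.of_nonneg_of_le (fun _ => norm_nonneg _) (hb u.1 v.1 u.2 v.2) hmaj_summable
    have h1 := Summable.sum_add_tsum_compl (s := box N) hsum
    have h2 : M u v - MN N u v
        = ∑' x : ↑(↑(box N) : Set (ℕ × ℕ))ᶜ, f u.1 v.1 u.2 v.2 x := by
      rw [hM, show MN N u v = ∑ nm ∈ box N, f u.1 v.1 u.2 v.2 nm from rfl, ← h1]
      exact add_sub_cancel_left _ _
    rw [h2, htaildef]
    refine le_trans (norm_tsum_le_tsum_norm (hnorm.subtype _)) ?_
    exact Summable.tsum_le_tsum (fun x => hb u.1 v.1 u.2 v.2 x) (hnorm.subtype _)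
      (hmaj_summable.subtype _)
  have hQdiff : ∀ (N : ℕ) (y : Fin m × Fin s → Hq),
      |(dotProduct (star y) (M.mulVec y)).re - (dotProduct (star y) ((MN N).mulVec y)).re|
        ≤ tail N * (∑ w, ‖y w‖) ^ 2 := by
    intro N y
    have h1 : dotProduct (star y) (M.mulVec y) - dotProduct (star y) ((MN N).mulVec y)
        = dotProduct (star y) ((M - MN N).mulVec y) := by
      rw [Matrix.sub_mulVec, dotProduct_sub]
    have h2 : (dotProduct (star y) (M.mulVec y)).re
        - (dotProduct (star y) ((MN N).mulVec y)).re
        = (dotProduct (star y) ((M - MN N).mulVec y)).re := by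
      rw [← h1]; simp [Quaternion.re_sub]
    rw [h2]
    refine le_trans (hq_abs_re_le_norm _) ?_
    refine hq_form_norm_le _ _ _ fun u v => ?_
    rw [Matrix.sub_apply]
    exact hMdiff N u v
  have htail_tendsto : Filter.Tendsto tail Filter.atTop (nhds 0) := by
    have hbox : Filter.Tendsto box Filter.atTop Filter.atTop := by
      apply Filter.tendsto_atTop_finset_of_monotone
      · intro N N' hNN'
        exact Finset.product_subset_product (Finset.range_subset_range.mpr (by omega))
          (Finset.range_subset_range.mpr (by omega))
      · intro x
        exact ⟨max x.1 x.2, by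
          simp only [hboxdef, Finset.mem_product, Finset.mem_range]; omega⟩
    exact (tendsto_tsum_compl_atTop_zero maj).comp hbox
  -- the linear map L N
  set L : (N : ℕ) → ((Fin m × Fin s → Hq) →ₗ[Hqᵐᵒᵖ] (Fin (N+1) × Fin s → Hq)) := fun N =>
    { toFun := fun x q => ∑ a : Fin m, (star (p a)) ^ (q.1 : ℕ) * x (a, q.2)
      map_add' := by
        intro x y; funext q
        simp [mul_add, Finset.sum_add_distrib]
      map_smul' := by
        intro c x; funext q
        simp only [Pi.smul_apply, MulOpposite.smul_eq_mul_unop, RingHom.id_apply]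
        rw [Finset.sum_mul]
        exact Finset.sum_congr rfl fun a _ => (mul_assoc _ _ _).symm } with hLdef
  -- the key algebraic identity
  have hLT : ∀ (N : ℕ) (x : Fin m × Fin s → Hq),
      dotProduct (star (L N x)) ((qToeplitz r N).mulVec (L N x))
        = dotProduct (star x) ((MN N).mulVec x) := by
    intro N x
    set V : Matrix (Fin (N+1) × Fin s) (Fin m × Fin s) Hq :=
      Matrix.of fun q u => if q.2 = u.2 then (star (p u.1)) ^ (q.1 : ℕ) else 0 with hVdef
    have hVapp : ∀ q u, V q u = if q.2 = u.2 then (star (p u.1)) ^ (q.1 : ℕ) else 0 :=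
      fun q u => rfl
    have hstarV : ∀ q (u : Fin m × Fin s),
        star (V q u) = if q.2 = u.2 then (p u.1) ^ (q.1 : ℕ) else 0 := by
      intro q u
      rw [hVapp, apply_ite star, star_pow, star_star, star_zero]
    have hT : ∀ (q q' : Fin (N+1) × Fin s),
        qToeplitz r N q q' = r ((q.1 : ℤ) - (q'.1 : ℤ)) q.2 q'.2 := fun q q' => rfl
    have hLV : L N x = V.mulVec x := by
      funext q
      show ∑ a : Fin m, (star (p a)) ^ (q.1 : ℕ) * x (a, q.2)
        = ∑ u, V q u * x u
      rw [Fintype.sum_prod_type]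
      refine Finset.sum_congr rfl fun a _ => ?_
      rw [show (∑ i : Fin s, V q (a, i) * x (a, i))
          = ∑ i : Fin s, if q.2 = i then (star (p a)) ^ (q.1 : ℕ) * x (a, i) else 0 from
        Finset.sum_congr rfl fun i _ => by rw [hVapp]; dsimp only; rw [ite_mul, zero_mul]]
      rw [Finset.sum_ite_eq (Finset.univ : Finset (Fin s)) q.2
        (fun i => (star (p a)) ^ (q.1 : ℕ) * x (a, i))]
      simp
    have hMNV : MN N = Vᴴ * (qToeplitz r N) * V := by
      refine Matrix.ext fun u v => ?_
      have hrhs : (Vᴴ * qToeplitz r N * V) u v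
          = ∑ q' : Fin (N+1) × Fin s, (∑ q : Fin (N+1) × Fin s,
              star (V q u) * qToeplitz r N q q') * V q' v := by
        simp only [Matrix.mul_apply, Matrix.conjTranspose_apply]
      have hcollapse : ∀ (n' : Fin (N+1)) (j : Fin s),
          (∑ q : Fin (N+1) × Fin s, star (V q u) * qToeplitz r N q (n', j))
            = ∑ n : Fin (N+1), (p u.1) ^ (n : ℕ) * r ((n : ℤ) - (n' : ℤ)) u.2 j := by
        intro n' j
        rw [Fintype.sum_prod_type]
        refine Finset.sum_congr rfl fun n _ => ?_
        rw [show (∑ i : Fin s, star (V (n, i) u) * qToeplitz r N (n, i) (n', j))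
            = ∑ i : Fin s, if i = u.2 then
                (p u.1) ^ (n : ℕ) * r ((n : ℤ) - (n' : ℤ)) i j else 0 from
          Finset.sum_congr rfl fun i _ => by
            rw [hstarV, hT]; dsimp only; rw [ite_mul, zero_mul]]
        rw [Finset.sum_ite_eq' (Finset.univ : Finset (Fin s)) u.2
          (fun i => (p u.1) ^ (n : ℕ) * r ((n : ℤ) - (n' : ℤ)) i j)]
        simp
      rw [hrhs]; symm
      calc ∑ q' : Fin (N+1) × Fin s, (∑ q : Fin (N+1) × Fin s,
              star (V q u) * qToeplitz r N q q') * V q' v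
          = ∑ n' : Fin (N+1), (∑ n : Fin (N+1),
              (p u.1) ^ (n : ℕ) * r ((n : ℤ) - (n' : ℤ)) u.2 v.2)
                * (star (p v.1)) ^ (n' : ℕ) := by
            rw [Fintype.sum_prod_type]
            refine Finset.sum_congr rfl fun n' _ => ?_
            rw [show (∑ j : Fin s, (∑ q : Fin (N+1) × Fin s,
                star (V q u) * qToeplitz r N q (n', j)) * V (n', j) v)
              = ∑ j : Fin s, if j = v.2 then (∑ q : Fin (N+1) × Fin s,
                  star (V q u) * qToeplitz r N q (n', j))
                    * (star (p v.1)) ^ (n' : ℕ) else 0 from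
              Finset.sum_congr rfl fun j _ => by
                rw [hVapp]; dsimp only; rw [mul_ite, mul_zero]]
            rw [Finset.sum_ite_eq' (Finset.univ : Finset (Fin s)) v.2
              (fun j => (∑ q : Fin (N+1) × Fin s,
                star (V q u) * qToeplitz r N q (n', j)) * (star (p v.1)) ^ (n' : ℕ))]
            simp only [Finset.mem_univ, if_true]
            rw [hcollapse]
          _ = ∑ n' ∈ Finset.range (N+1), ∑ n ∈ Finset.range (N+1),
                (p u.1) ^ n * r ((n : ℤ) - (n' : ℤ)) u.2 v.2 * (star (p v.1)) ^ n' := by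
            rw [Fin.sum_univ_eq_sum_range (fun n' => (∑ n : Fin (N+1),
              (p u.1) ^ (n : ℕ) * r ((n : ℤ) - (n' : ℤ)) u.2 v.2)
                * (star (p v.1)) ^ n')]
            refine Finset.sum_congr rfl fun n' _ => ?_
            rw [Fin.sum_univ_eq_sum_range (fun n =>
              (p u.1) ^ n * r ((n : ℤ) - (n' : ℤ)) u.2 v.2), Finset.sum_mul]
          _ = MN N u v := by
            rw [show MN N u v = ∑ nm ∈ box N, f u.1 v.1 u.2 v.2 nm from rfl,
              hboxdef, hf]
            dsimp only
            rw [Finset.sum_product]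
            rw [Finset.sum_comm]
    rw [hLV, hMNV, Matrix.star_mulVec, Matrix.mulVec_mulVec,
      Matrix.dotProduct_mulVec, Matrix.dotProduct_mulVec, Matrix.vecMul_vecMul,
      Matrix.mul_assoc]
  -- main argument
  intro W hW
  by_cases hWbot : W = ⊥
  · rw [hWbot]; simp
  obtain ⟨x₀, hx₀W, hx₀⟩ := Submodule.exists_mem_ne_zero_of_ne_bot hWbot
  -- W as a real submodule
  have hsmul_real : ∀ (c : ℝ) (x : Fin m × Fin s → Hq),
      c • x = (MulOpposite.op ((c : Hq))) • x := by
    intro c x; funext u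
    simp only [Pi.smul_apply, MulOpposite.smul_eq_mul_unop, MulOpposite.unop_op]
    rw [← Quaternion.coe_commutes, Quaternion.coe_mul_eq_smul]
  set Wr : Submodule ℝ (Fin m × Fin s → Hq) :=
    { carrier := ↑W
      add_mem' := fun ha hb => W.add_mem ha hb
      zero_mem' := W.zero_mem
      smul_mem' := fun c x hx => by
        rw [SetLike.mem_coe] at hx ⊢
        rw [hsmul_real c x]
        exact W.smul_mem _ hx } with hWrdef
  have hWr_mem : ∀ x, x ∈ Wr ↔ x ∈ W := fun x => Iff.rfl
  -- compact sphere
  set S : Set (Fin m × Fin s → Hq) := ↑Wr ∩ Metric.sphere 0 1 with hSdef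
  have hScompact : IsCompact S :=
    (isCompact_sphere 0 1).inter_left Wr.closed_of_finiteDimensional
  have hSne : S.Nonempty := by
    refine ⟨‖x₀‖⁻¹ • x₀, ?_, ?_⟩
    · exact Wr.smul_mem _ ((hWr_mem x₀).mpr hx₀W)
    · simp only [mem_sphere_iff_norm, sub_zero, norm_smul, norm_inv, norm_norm]
      rw [inv_mul_cancel₀ (norm_ne_zero_iff.mpr hx₀)]
  have hSmem : ∀ x ∈ S, x ∈ W ∧ ‖x‖ = 1 := by
    intro x hx
    refine ⟨(hWr_mem x).mp hx.1, ?_⟩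
    have := hx.2
    simpa [mem_sphere_iff_norm] using this
  -- maximum of the form on S
  obtain ⟨z, hzS, hzmax⟩ := hScompact.exists_isMaxOn hSne (hq_form_continuous M).continuousOn
  set δ : ℝ := (dotProduct (star z) (M.mulVec z)).re with hδdef
  have hδneg : δ < 0 := by
    obtain ⟨hzW, hz1⟩ := hSmem z hzS
    exact hW z hzW (fun h => by simp [h] at hz1)
  -- choose N
  set cB : ℝ := (Fintype.card (Fin m × Fin s) : ℝ) ^ 2 + 1 with hcBdef
  have hcBpos : 0 < cB := by positivity
  have : ∀ᶠ N in Filter.atTop, tail N < (-δ) / cB :=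
    htail_tendsto.eventually_lt_const (div_pos (neg_pos.mpr hδneg) hcBpos)
  obtain ⟨N, hN⟩ := this.exists
  -- MN N form is negative on W
  have hMNneg : ∀ x ∈ W, x ≠ 0 → (dotProduct (star x) ((MN N).mulVec x)).re < 0 := by
    intro x hxW hxne
    have hc : (0:ℝ) < ‖x‖ := norm_pos_iff.mpr hxne
    set y : Fin m × Fin s → Hq := ‖x‖⁻¹ • x with hydef
    have hyS : y ∈ S := by
      refine ⟨Wr.smul_mem _ ((hWr_mem x).mpr hxW), ?_⟩
      simp only [mem_sphere_iff_norm, sub_zero, hydef, norm_smul, norm_inv, norm_norm]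
      exact inv_mul_cancel₀ hc.ne'
    have hy1 : ‖y‖ = 1 := by
      have := hyS.2
      simpa [mem_sphere_iff_norm] using this
    -- bound on ∑ ‖y w‖
    have hybd : (∑ w, ‖y w‖) ^ 2 ≤ cB - 1 := by
      rw [hcBdef]
      have h1 : ∑ w, ‖y w‖ ≤ (Fintype.card (Fin m × Fin s) : ℝ) := by
        calc ∑ w, ‖y w‖ ≤ ∑ _w : Fin m × Fin s, (1:ℝ) :=
              Finset.sum_le_sum fun w _ => le_trans (norm_le_pi_norm y w) (le_of_eq hy1)
          _ = (Fintype.card (Fin m × Fin s) : ℝ) := by simp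
      have h0 : (0:ℝ) ≤ ∑ w, ‖y w‖ := Finset.sum_nonneg fun w _ => norm_nonneg _
      have := pow_le_pow_left₀ h0 h1 2
      linarith
    have hyneg : (dotProduct (star y) ((MN N).mulVec y)).re < 0 := by
      have hmax : (dotProduct (star y) (M.mulVec y)).re ≤ δ := hzmax hyS
      have hdiff := hQdiff N y
      have htails : tail N * (∑ w, ‖y w‖) ^ 2 ≤ tail N * (cB - 1) :=
        mul_le_mul_of_nonneg_left hybd (htail0 N)
      have htail2 : tail N * (cB - 1) < -δ := by
        have h1 : tail N * (cB - 1) ≤ tail N * cB :=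
          mul_le_mul_of_nonneg_left (by linarith) (htail0 N)
        have h2 : tail N * cB < ((-δ) / cB) * cB :=
          mul_lt_mul_of_pos_right hN hcBpos
        rw [div_mul_cancel₀ _ hcBpos.ne'] at h2
        linarith
      have := abs_le.mp hdiff
      linarith [this.2]
    have hxy : x = ‖x‖ • y := by
      rw [hydef, smul_smul, mul_inv_cancel₀ hc.ne', one_smul]
    have hform : dotProduct (star x) ((MN N).mulVec x)
        = (‖x‖ * ‖x‖) • dotProduct (star y) ((MN N).mulVec y) := by
      conv_lhs => rw [hxy]
      exact hq_form_smul _ _ _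
    rw [hform]
    rw [Quaternion.re_smul]
    exact mul_neg_of_pos_of_neg (by positivity) hyneg
  -- conclude
  have hginj : Function.Injective ((L N).comp W.subtype) := by
    rw [← LinearMap.ker_eq_bot, eq_bot_iff]
    rintro ⟨x, hxW⟩ hx
    simp only [LinearMap.mem_ker, LinearMap.comp_apply, Submodule.subtype_apply] at hx
    by_contra hne
    have hxne : x ≠ 0 := by
      intro h; apply hne; simp only [Submodule.mem_bot]; exact Subtype.ext h
    have h1 := hLT N x
    rw [hx] at h1
    simp only [star_zero, Matrix.mulVec_zero, dotProduct_zero] at h1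
    have h2 := hMNneg x hxW hxne
    rw [← h1] at h2
    simp [Quaternion.re_zero] at h2
  have hrange : LinearMap.range ((L N).comp W.subtype) = W.map (L N) := by
    rw [LinearMap.range_comp, Submodule.range_subtype]
  have hWmap : ∀ y ∈ W.map (L N), y ≠ 0 →
      (dotProduct (star y) ((qToeplitz r N).mulVec y)).re < 0 := by
    rintro y hy hy0
    obtain ⟨x, hxW, rfl⟩ := hy
    have hxne : x ≠ 0 := fun h => hy0 (by rw [h]; exact map_zero _)
    rw [hLT]
    exact hMNneg x hxW hxne
  calc Module.finrank Hqᵐᵒᵖ W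
      = Module.finrank Hqᵐᵒᵖ (LinearMap.range ((L N).comp W.subtype)) :=
        (LinearMap.finrank_range_of_inj hginj).symm
    _ = Module.finrank Hqᵐᵒᵖ (W.map (L N)) := by rw [hrange]
    _ ≤ κ := hneg N _ hWmap
end
end

section
/- Let (aₙ)_{n≥0} be a sequence in ℍ with a₀ = 1 such that f(p) = ∑ₙ pⁿ aₙ converges for all ‖p‖ < 1, and assume re(f(p)) ≥ 0 for every p with ‖p‖ < 1. Then there exists a real constant k such that ‖aₙ‖ ≤ k for every n ≥ 0. -/
noncomputable section

open MeasureTheory Matrix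
open scoped ComplexOrder

open Complex in
lemma zeta_pow_M {M : ℕ} (hM : 0 < M) :
    (Complex.exp ((2 * Real.pi / M : ℝ) * Complex.I)) ^ (M : ℕ) = 1 := by
  rw [← Complex.exp_nat_mul]
  have hM' : (M : ℂ) ≠ 0 := Nat.cast_ne_zero.mpr hM.ne'
  have : (M : ℂ) * ((2 * Real.pi / M : ℝ) * Complex.I) = 2 * Real.pi * Complex.I := by
    push_cast
    field_simp
  rw [this, Complex.exp_two_pi_mul_I]

open Complex in
lemma zeta_zpow_eq_one_iff {M : ℕ} (hM : 0 < M) (l : ℤ) :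
    (Complex.exp ((2 * Real.pi / M : ℝ) * Complex.I)) ^ l = 1 ↔ (M : ℤ) ∣ l := by
  have hMne : (M : ℝ) ≠ 0 := Nat.cast_ne_zero.mpr hM.ne'
  have h2pi : (2 * Real.pi) ≠ 0 := by positivity
  rw [← Complex.exp_int_mul, Complex.exp_eq_one_iff]
  constructor
  · rintro ⟨k, hk⟩
    have h1 : (((l : ℝ) * (2 * Real.pi / M) : ℝ) : ℂ) * Complex.I
        = (((k : ℝ) * (2 * Real.pi) : ℝ) : ℂ) * Complex.I := by
      push_cast
      push_cast at hk
      linear_combination hk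
    have hre : (l : ℝ) * (2 * Real.pi / M) = (k : ℝ) * (2 * Real.pi) :=
      Complex.ofReal_inj.mp (mul_right_cancel₀ Complex.I_ne_zero h1)
    have hlk : (l : ℝ) = (k : ℝ) * M := by
      have h2 : (l : ℝ) * (2 * Real.pi) = ((k : ℝ) * M) * (2 * Real.pi) := by
        field_simp at hre
        linear_combination (2 * Real.pi) * hre
      exact mul_right_cancel₀ h2pi h2
    exact ⟨k, by exact_mod_cast (by linear_combination hlk : (l:ℝ) = (M:ℝ) * k)⟩
  · rintro ⟨k, rfl⟩
    refine ⟨k, ?_⟩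
    have hMc : (M : ℂ) ≠ 0 := Nat.cast_ne_zero.mpr hM.ne'
    push_cast
    field_simp

open Complex in
lemma zeta_sum {M : ℕ} (hM : 0 < M) (l : ℤ) :
    ∑ k ∈ Finset.range M,
        (Complex.exp ((2 * Real.pi / M : ℝ) * Complex.I)) ^ ((k : ℤ) * l)
      = if (M : ℤ) ∣ l then (M : ℂ) else 0 := by
  set ζ := Complex.exp ((2 * Real.pi / M : ℝ) * Complex.I) with hζ
  have hζne : ζ ≠ 0 := Complex.exp_ne_zero _
  have hterm : ∀ k : ℕ, ζ ^ ((k : ℤ) * l) = (ζ ^ l) ^ k := by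
    intro k
    rw [mul_comm, _root_.zpow_mul, zpow_natCast]
  simp only [hterm]
  by_cases hdvd : (M : ℤ) ∣ l
  · have hw : ζ ^ l = 1 := (zeta_zpow_eq_one_iff hM l).mpr hdvd
    rw [if_pos hdvd]
    simp [hw]
  · have hw : ζ ^ l ≠ 1 := fun h => hdvd ((zeta_zpow_eq_one_iff hM l).mp h)
    rw [geom_sum_eq hw]
    have hwM : (ζ ^ l) ^ M = 1 := by
      rw [← zpow_natCast (ζ ^ l) M, ← _root_.zpow_mul, mul_comm, _root_.zpow_mul, zpow_natCast,
        zeta_pow_M hM, _root_.one_zpow]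
    rw [hwM]
    simp [hdvd]

set_option maxHeartbeats 2000000 in
open Complex in
lemma caratheodory_bound (c : ℕ → ℂ) (hc0 : c 0 = 1) {r : ℝ} (hr0 : 0 ≤ r) (hr1 : r < 1)
    (hsum : Summable fun m : ℕ => ‖c m‖ * r ^ m)
    (hpos : ∀ t : ℝ, 0 ≤ (∑' m : ℕ,
      ((r ^ m : ℝ) : ℂ) * (c m * Complex.exp ((t : ℝ) * Complex.I) ^ m)).re)
    (n : ℕ) (hn : 1 ≤ n) : r ^ n * ‖c n‖ ≤ 8 := by
  classical
  -- tail control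
  obtain ⟨N0, hN0⟩ := (Metric.tendsto_atTop.mp (tendsto_sum_nat_add fun m => ‖c m‖ * r ^ m))
    (1/2) (by norm_num)
  set N : ℕ := max N0 (n+1) with hN
  have hNn : n + 1 ≤ N := le_max_right _ _
  set T : ℝ := ∑' j : ℕ, ‖c (j + N)‖ * r ^ (j + N) with hT
  have hTnonneg : 0 ≤ T := tsum_nonneg fun j => by positivity
  have hThalf : T ≤ 1/2 := by
    have := hN0 N (le_max_left _ _)
    rw [Real.dist_eq] at this
    have : |T - 0| < 1/2 := by simpa [hT] using this
    rw [sub_zero, _root_.abs_of_nonneg hTnonneg] at this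
    linarith
  set M : ℕ := N + n with hMdef
  have hM : 0 < M := by omega
  have hMgt : 2 * n < M := by omega
  -- the root of unity
  set θ : ℝ := 2 * Real.pi / M with hθdef
  set ζ : ℂ := Complex.exp ((θ : ℝ) * Complex.I) with hζdef
  have hζne : ζ ≠ 0 := Complex.exp_ne_zero _
  have hζnorm : ‖ζ‖ = 1 := by
    rw [hζdef, Complex.norm_exp_ofReal_mul_I]
  have hnorm1 : ∀ z : ℤ, ‖ζ ^ z‖ = 1 := fun z => by rw [norm_zpow, hζnorm, _root_.one_zpow]
  have hkm : ∀ k m : ℕ, ζ ^ ((k : ℤ) * (m : ℤ)) = (ζ ^ k) ^ m := by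
    intro k m
    rw [_root_.zpow_mul, zpow_natCast, zpow_natCast]
  have hstar : star ζ = ζ⁻¹ := by
    rw [hζdef, Complex.star_def, ← Complex.exp_conj, ← Complex.exp_neg]
    congr 1
    simp [Complex.conj_I]
  -- summability helper
  have hBound : ∀ (v : ℕ → ℂ), (∀ m, ‖v m‖ ≤ ‖c m‖ * r ^ m) → Summable v := fun v hv =>
    Summable.of_norm_bounded hsum hv
  have hterm_norm : ∀ (m : ℕ) (w : ℂ), ‖w‖ = 1 →
      ‖((r ^ m : ℝ) : ℂ) * (c m * w)‖ = ‖c m‖ * r ^ m := by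
    intro m w hw
    rw [norm_mul, norm_mul, hw, mul_one, Complex.norm_real, Real.norm_eq_abs,
      _root_.abs_of_nonneg (pow_nonneg hr0 m), mul_comm]
  -- the partial sums of the positive function
  set G : ℕ → ℂ := fun k => ∑' m : ℕ, ((r ^ m : ℝ) : ℂ) * (c m * (ζ ^ k) ^ m) with hGdef
  have hGpos : ∀ k : ℕ, 0 ≤ (G k).re := by
    intro k
    have he : Complex.exp (((2 * Real.pi * k / M : ℝ) : ℂ) * Complex.I) = ζ ^ k := by
      rw [hζdef, hθdef, ← Complex.exp_nat_mul]
      congr 1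
      push_cast
      ring
    have := hpos (2 * Real.pi * k / M)
    rwa [he] at this
  have hGsummable : ∀ k : ℕ, Summable fun m : ℕ => ((r ^ m : ℝ) : ℂ) * (c m * (ζ ^ k) ^ m) := by
    intro k
    refine hBound _ fun m => ?_
    rw [hterm_norm m _ (by rw [norm_pow, norm_pow, hζnorm, one_pow, one_pow])]
  -- the divisibility indicator
  set A : ℤ → ℂ := fun l => if (M : ℤ) ∣ l then (M : ℂ) else 0 with hAdef
  have hAnorm : ∀ l : ℤ, ‖A l‖ ≤ M := by
    intro l
    by_cases h : (M : ℤ) ∣ l <;> simp [hAdef, h]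
  have hAsum : ∀ l : ℤ, ∑ k ∈ Finset.range M, ζ ^ ((k : ℤ) * l) = A l := by
    intro l
    rw [hζdef, hθdef]
    exact zeta_sum hM l
  have hAzero : ∀ l : ℤ, l ≠ 0 → l.natAbs < M → A l = 0 := by
    intro l hl hlM
    have : ¬ (M : ℤ) ∣ l := fun h =>
      hl (Int.eq_zero_of_dvd_of_natAbs_lt_natAbs h (by simpa using hlM))
    simp [hAdef, this]
  have hA0 : A 0 = M := by simp [hAdef]
  -- swap of finite sum and tsum
  have swap_general : ∀ (d : ℕ → ℂ), (∀ m, ‖d m‖ ≤ ‖c m‖ * r ^ m) → ∀ (w : ℕ → ℤ),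
      ∑ k ∈ Finset.range M, ∑' m : ℕ, d m * ζ ^ ((k : ℤ) * w m)
        = ∑' m : ℕ, d m * A (w m) := by
    intro d hd w
    rw [← Summable.tsum_finsetSum (fun k _ => hBound _ fun m => by
      rw [norm_mul, hnorm1, mul_one]; exact hd m)]
    congr 1
    funext m
    rw [← Finset.mul_sum, hAsum]
  -- star helper
  have hstar_pow : ∀ j : ℕ, star (ζ ^ j) = ζ ^ (-(j : ℤ)) := by
    intro j
    rw [star_pow, hstar, inv_pow, ← zpow_natCast, ← _root_.zpow_neg]
  -- per-k identity
  have hG2 : ∀ k : ℕ, (2 * (G k).re : ℝ) * ζ ^ (-((k : ℤ) * n)) =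
      (∑' m : ℕ, (((r ^ m : ℝ) : ℂ) * c m) * ζ ^ ((k : ℤ) * ((m : ℤ) - n)))
      + (∑' m : ℕ, (((r ^ m : ℝ) : ℂ) * (starRingEnd ℂ) (c m)) * ζ ^ ((k : ℤ) * (-(m : ℤ) - n))) := by
    intro k
    have h1 : (∑' m : ℕ, (((r ^ m : ℝ) : ℂ) * c m) * ζ ^ ((k : ℤ) * ((m : ℤ) - n)))
        = G k * ζ ^ (-((k : ℤ) * n)) := by
      rw [hGdef, ← tsum_mul_right]
      congr 1
      funext m
      have hz : ζ ^ ((k : ℤ) * ((m : ℤ) - n)) = (ζ ^ k) ^ m * ζ ^ (-((k : ℤ) * n)) := by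
        rw [← hkm k m, ← zpow_add₀ hζne]
        congr 1
        ring
      rw [hz]
      ring
    have h2 : (∑' m : ℕ, (((r ^ m : ℝ) : ℂ) * (starRingEnd ℂ) (c m)) * ζ ^ ((k : ℤ) * (-(m : ℤ) - n)))
        = star (G k) * ζ ^ (-((k : ℤ) * n)) := by
      rw [hGdef]
      simp only
      rw [tsum_star, ← tsum_mul_right]
      congr 1
      funext m
      rw [star_mul', star_mul', ← pow_mul, hstar_pow (k * m)]
      have hz2 : ζ ^ ((k : ℤ) * (-(m : ℤ) - n)) = ζ ^ (-((k * m : ℕ) : ℤ)) * ζ ^ (-((k : ℤ) * n)) := by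
        rw [← zpow_add₀ hζne]
        congr 1
        push_cast
        ring
      rw [hz2, Complex.star_def, Complex.conj_ofReal]
      ring
    rw [h1, h2, ← add_mul]
    congr 1
    rw [← Complex.add_conj]
    rfl
  -- norms of the coefficient sequences
  have hd1 : ∀ m : ℕ, ‖((r ^ m : ℝ) : ℂ) * c m‖ ≤ ‖c m‖ * r ^ m := fun m =>
    le_of_eq (by
      rw [norm_mul, Complex.norm_real, Real.norm_eq_abs,
        _root_.abs_of_nonneg (pow_nonneg hr0 m), mul_comm])
  have hd2 : ∀ m : ℕ, ‖((r ^ m : ℝ) : ℂ) * (starRingEnd ℂ) (c m)‖ ≤ ‖c m‖ * r ^ m := fun m =>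
    le_of_eq (by
      rw [norm_mul, Complex.norm_real, Real.norm_eq_abs,
        _root_.abs_of_nonneg (pow_nonneg hr0 m), RCLike.norm_conj, mul_comm])
  set D1 : ℂ := ∑' m : ℕ, (((r ^ m : ℝ) : ℂ) * c m) * A ((m : ℤ) - n) with hD1
  set D2 : ℂ := ∑' m : ℕ, (((r ^ m : ℝ) : ℂ) * (starRingEnd ℂ) (c m)) * A (-(m : ℤ) - n) with hD2
  have hsum_eq : D1 + D2
      = ∑ k ∈ Finset.range M, ((2 * (G k).re : ℝ) : ℂ) * ζ ^ (-((k : ℤ) * n)) := by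
    rw [hD1, hD2, ← swap_general _ hd1 (fun m => (m : ℤ) - n),
      ← swap_general _ hd2 (fun m => -(m : ℤ) - n), ← Finset.sum_add_distrib]
    exact Finset.sum_congr rfl fun k _ => (hG2 k).symm
  have hnormDD : ‖D1 + D2‖ ≤ ∑ k ∈ Finset.range M, 2 * (G k).re := by
    rw [hsum_eq]
    refine (norm_sum_le _ _).trans (Finset.sum_le_sum fun k _ => ?_)
    rw [norm_mul, hnorm1, mul_one, Complex.norm_real, Real.norm_eq_abs,
      _root_.abs_of_nonneg (by linarith [hGpos k])]
  -- tail estimate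
  have hsum_shift : Summable fun j : ℕ => ‖c (j + N)‖ * r ^ (j + N) :=
    (summable_nat_add_iff N).mpr hsum
  have tail_est : ∀ v : ℕ → ℂ, (∀ m, ‖v m‖ ≤ M * (‖c m‖ * r ^ m)) → (∀ m, m < N → v m = 0) →
      ‖∑' m : ℕ, v m‖ ≤ M * T := by
    intro v hv hv0
    have hvs : Summable v := Summable.of_norm_bounded (hsum.mul_left (M:ℝ)) hv
    have heq : ∑' m : ℕ, v m = ∑' j : ℕ, v (j + N) := by
      rw [← Summable.sum_add_tsum_nat_add N hvs,
        Finset.sum_eq_zero (fun i hi => hv0 i (Finset.mem_range.mp hi)), zero_add]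
    rw [heq]
    have hhs : HasSum (fun j : ℕ => (M : ℝ) * (‖c (j + N)‖ * r ^ (j + N))) ((M : ℝ) * T) := by
      rw [hT]
      exact hsum_shift.hasSum.mul_left (M : ℝ)
    exact tsum_of_norm_bounded hhs (fun j => hv (j + N))
  have hAbnd : ∀ (x : ℂ) (l : ℤ) (m : ℕ), ‖x‖ ≤ ‖c m‖ * r ^ m →
      ‖x * A l‖ ≤ M * (‖c m‖ * r ^ m) := by
    intro x l m hx
    rw [norm_mul, mul_comm]
    exact mul_le_mul (hAnorm l) hx (norm_nonneg x) (Nat.cast_nonneg M)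
  -- D1 split
  have hD1sum : Summable fun m : ℕ => (((r ^ m : ℝ) : ℂ) * c m) * A ((m : ℤ) - n) :=
    Summable.of_norm_bounded (hsum.mul_left (M:ℝ)) fun m => hAbnd _ _ m (hd1 m)
  have hsplit1 : D1 = (((r ^ n : ℝ) : ℂ) * c n) * (M : ℂ)
      + ∑' m : ℕ, (if m = n then 0 else (((r ^ m : ℝ) : ℂ) * c m) * A ((m : ℤ) - n)) := by
    rw [hD1, Summable.tsum_eq_add_tsum_ite hD1sum n, sub_self, hA0]
  have hv1tail : ‖∑' m : ℕ,
      (if m = n then 0 else (((r ^ m : ℝ) : ℂ) * c m) * A ((m : ℤ) - n))‖ ≤ M * T := by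
    refine tail_est _ (fun m => ?_) (fun m hm => ?_)
    · by_cases h : m = n
      · rw [if_pos h, norm_zero]
        positivity
      · rw [if_neg h]
        exact hAbnd _ _ m (hd1 m)
    · by_cases h : m = n
      · rw [h]; simp
      · rw [if_neg h, hAzero ((m : ℤ) - n) ?_ ?_, mul_zero]
        · intro hc
          exact h (by omega)
        · have := hMdef
          omega
  -- D2 estimate
  have hD2tail : ‖D2‖ ≤ M * T := by
    rw [hD2]
    refine tail_est _ (fun m => hAbnd _ _ m (hd2 m)) (fun m hm => ?_)
    rw [hAzero (-(m : ℤ) - n) (by omega) ?_, mul_zero]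
    have := hMdef
    omega
  -- the mean
  have hQeq : ∑ k ∈ Finset.range M, G k = ∑' m : ℕ, (((r ^ m : ℝ) : ℂ) * c m) * A (m : ℤ) := by
    rw [← swap_general _ hd1 (fun m => (m : ℤ))]
    refine Finset.sum_congr rfl fun k _ => ?_
    rw [hGdef]
    simp only
    congr 1
    funext m
    rw [hkm k m]
    ring
  have hQsum : Summable fun m : ℕ => (((r ^ m : ℝ) : ℂ) * c m) * A (m : ℤ) :=
    Summable.of_norm_bounded (hsum.mul_left (M:ℝ)) fun m => hAbnd _ _ m (hd1 m)
  have hsplitQ : ∑' m : ℕ, (((r ^ m : ℝ) : ℂ) * c m) * A (m : ℤ) = (M : ℂ)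
      + ∑' m : ℕ, (if m = 0 then 0 else (((r ^ m : ℝ) : ℂ) * c m) * A (m : ℤ)) := by
    rw [Summable.tsum_eq_add_tsum_ite hQsum 0]
    congr 1
    rw [hc0]
    push_cast [hA0]
    ring
  have hv3tail : ‖∑' m : ℕ,
      (if m = 0 then 0 else (((r ^ m : ℝ) : ℂ) * c m) * A (m : ℤ))‖ ≤ M * T := by
    refine tail_est _ (fun m => ?_) (fun m hm => ?_)
    · by_cases h : m = 0
      · rw [if_pos h, norm_zero]
        positivity
      · rw [if_neg h]
        exact hAbnd _ _ m (hd1 m)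
    · by_cases h : m = 0
      · rw [h]; simp
      · rw [if_neg h, hAzero (m : ℤ) (by omega) ?_, mul_zero]
        have := hMdef
        omega
  -- sum of real parts bound
  have hreQ : ∑ k ∈ Finset.range M, (G k).re ≤ M + M * T := by
    rw [← Complex.re_sum, hQeq, hsplitQ, Complex.add_re, Complex.natCast_re]
    have := Complex.re_le_norm (∑' m : ℕ, (if m = 0 then 0 else (((r ^ m : ℝ) : ℂ) * c m) * A (m : ℤ)))
    linarith [hv3tail]
  -- final assembly
  have hMpos : (0 : ℝ) < M := by exact_mod_cast hM
  have hkey : (M : ℝ) * (r ^ n * ‖c n‖) ≤ 4 * M := by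
    have h1 : ‖(((r ^ n : ℝ) : ℂ) * c n) * (M : ℂ)‖ = M * (r ^ n * ‖c n‖) := by
      rw [norm_mul, norm_mul, Complex.norm_real, Complex.norm_natCast, Real.norm_eq_abs,
        _root_.abs_of_nonneg (pow_nonneg hr0 n)]
      ring
    have h2 : ‖(((r ^ n : ℝ) : ℂ) * c n) * (M : ℂ)‖
        ≤ ‖D1‖ + M * T := by
      have : (((r ^ n : ℝ) : ℂ) * c n) * (M : ℂ) = D1 - ∑' m : ℕ,
          (if m = n then 0 else (((r ^ m : ℝ) : ℂ) * c m) * A ((m : ℤ) - n)) := by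
        rw [hsplit1]; ring
      rw [this]
      exact (norm_sub_le _ _).trans (by linarith [hv1tail])
    have h3 : ‖D1‖ ≤ ‖D1 + D2‖ + ‖D2‖ := by
      have h5 := norm_sub_le (D1 + D2) D2
      simpa using h5
    have h4 : ∑ k ∈ Finset.range M, 2 * (G k).re ≤ 2 * (M + M * T) := by
      rw [← Finset.mul_sum]
      linarith [hreQ]
    have hMT : M * T ≤ M * (1/2) := by
      exact mul_le_mul_of_nonneg_left hThalf (le_of_lt hMpos)
    calc (M : ℝ) * (r ^ n * ‖c n‖) = ‖(((r ^ n : ℝ) : ℂ) * c n) * (M : ℂ)‖ := h1.symm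
    _ ≤ ‖D1‖ + M * T := h2
    _ ≤ ‖D1 + D2‖ + ‖D2‖ + M * T := by linarith
    _ ≤ 2 * (M + M * T) + M * T + M * T := by linarith [hnormDD, hD2tail]
    _ ≤ 4 * M := by linarith
  have : r ^ n * ‖c n‖ ≤ 4 := by
    by_contra hcon
    push_neg at hcon
    nlinarith
  linarith

lemma q_abs_re_le (q : Quaternion ℝ) : |q.re| ≤ ‖q‖ := by
  have h : q.re ^ 2 ≤ ‖q‖ * ‖q‖ := by
    rw [← Quaternion.normSq_eq_norm_mul_self, Quaternion.normSq_def']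
    nlinarith [sq_nonneg q.imI, sq_nonneg q.imJ, sq_nonneg q.imK]
  nlinarith [norm_nonneg q, abs_nonneg q.re, sq_abs q.re]

set_option maxHeartbeats 2000000 in
lemma slice_bound (a : ℕ → Quaternion ℝ) (ha0 : a 0 = 1)
    (hconv : ∀ p : Quaternion ℝ, ‖p‖ < 1 → Summable fun m : ℕ => p ^ m * a m)
    (hpos2 : ∀ p : Quaternion ℝ, ‖p‖ < 1 → 0 ≤ (∑' m : ℕ, p ^ m * a m).re)
    (I : Quaternion ℝ) (hI2 : I * I = -1) (hIre : I.re = 0)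
    (n : ℕ) (hn : 1 ≤ n) : |(a n).re| ≤ 16 ∧ |(I * a n).re| ≤ 16 := by
  classical
  have hn' : (1 : ℝ) ≤ (n : ℝ) := by exact_mod_cast hn
  set r : ℝ := 1 - 1 / (2 * n) with hrdef
  have hinv : 0 < 1 / (2 * (n : ℝ)) := by positivity
  have hinv2 : 1 / (2 * (n : ℝ)) ≤ 1 / 2 := by
    apply div_le_div_of_nonneg_left (by norm_num) (by norm_num) <;> linarith
  have hr0 : 0 ≤ r := by rw [hrdef]; linarith
  have hr1 : r < 1 := by rw [hrdef]; linarith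
  have hrn : (1 : ℝ) / 2 ≤ r ^ n := by
    have hx : (-2 : ℝ) ≤ -(1 / (2 * (n : ℝ))) := by linarith
    have hb := one_add_mul_le_pow hx n
    have h1 : 1 + (n : ℝ) * (-(1 / (2 * n))) = 1 / 2 := by
      field_simp
      ring
    have h2 : (1 : ℝ) + -(1 / (2 * (n : ℝ))) = r := by rw [hrdef]; ring
    rw [h1, h2] at hb
    exact hb
  -- norm summability at radius r
  have hrq : ‖((r : ℝ) : Quaternion ℝ)‖ < 1 := by
    rw [Quaternion.norm_coe, Real.norm_eq_abs, _root_.abs_of_nonneg hr0]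
    exact hr1
  have hsa : Summable fun m : ℕ => ‖a m‖ * r ^ m := by
    have h2 : Summable fun m : ℕ => ‖((r : Quaternion ℝ)) ^ m * a m‖ :=
      summable_norm_iff.mpr (hconv _ hrq)
    refine h2.congr fun m => ?_
    rw [norm_mul, norm_pow, Quaternion.norm_coe, Real.norm_eq_abs,
      _root_.abs_of_nonneg hr0, mul_comm]
  -- the slice coefficients
  set c : ℕ → ℂ := fun m => ⟨(a m).re, -((I * a m).re)⟩ with hcdef
  have hc0 : c 0 = 1 := by
    rw [hcdef]
    simp only
    apply Complex.ext <;> simp [ha0, hIre, Quaternion.re_one]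
  have hstarI : star I = -I := by
    ext <;> simp [hIre]
  have hnSqI : Quaternion.normSq I = 1 := by
    have h := Quaternion.self_mul_star I
    rw [hstarI, mul_neg, hI2, neg_neg] at h
    have h2 : ((Quaternion.normSq I : ℝ) : Quaternion ℝ) = ((1 : ℝ) : Quaternion ℝ) := by
      rw [← h]; norm_cast
    exact Quaternion.coe_injective h2
  have hnormI : ‖I‖ = 1 := by
    have h3 := Quaternion.normSq_eq_norm_mul_self I
    nlinarith [norm_nonneg I]
  have hI123 : I.imI ^ 2 + I.imJ ^ 2 + I.imK ^ 2 = 1 := by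
    have := Quaternion.normSq_def' I
    rw [hnSqI, hIre] at this
    nlinarith [this]
  have hsumc : Summable fun m : ℕ => ‖c m‖ * r ^ m := by
    refine Summable.of_nonneg_of_le (fun m => by positivity) (fun m => ?_) (hsa.mul_left 2)
    have h1 : ‖c m‖ ≤ 2 * ‖a m‖ := by
      calc ‖c m‖ ≤ |(c m).re| + |(c m).im| := by
            exact Complex.norm_le_abs_re_add_abs_im _
      _ ≤ ‖a m‖ + ‖I * a m‖ := by
            have e1 : (c m).re = (a m).re := rfl
            have e2 : (c m).im = -((I * a m).re) := rfl
            rw [e1, e2, abs_neg]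
            exact add_le_add (q_abs_re_le _) (q_abs_re_le _)
      _ = 2 * ‖a m‖ := by rw [norm_mul, hnormI, one_mul]; ring
    have := mul_le_mul_of_nonneg_right h1 (pow_nonneg hr0 m)
    calc ‖c m‖ * r ^ m ≤ 2 * ‖a m‖ * r ^ m := this
    _ = 2 * (‖a m‖ * r ^ m) := by ring
  -- the algebra map from ℂ
  set φ := Complex.liftAux I hI2 with hφ
  have hφ_apply : ∀ z : ℂ, φ z = ((z.re : ℝ) : Quaternion ℝ) + z.im • I := by
    intro z
    rw [hφ, Complex.liftAux_apply]
    rfl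
  -- positivity of the complex slice series
  have hkeypos : ∀ t : ℝ, 0 ≤ (∑' m : ℕ,
      ((r ^ m : ℝ) : ℂ) * (c m * Complex.exp ((t : ℝ) * Complex.I) ^ m)).re := by
    intro t
    set z : ℂ := (r : ℂ) * Complex.exp ((t : ℝ) * Complex.I) with hz
    set p : Quaternion ℝ := φ z with hp
    have hsqz : z.re ^ 2 + z.im ^ 2 = r * r := by
      have h1 : ‖z‖ = r := by
        rw [hz, norm_mul, Complex.norm_exp_ofReal_mul_I, mul_one, Complex.norm_real,
          Real.norm_eq_abs, _root_.abs_of_nonneg hr0]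
      have h2 := Complex.sq_norm z
      rw [h1, Complex.normSq_apply] at h2
      nlinarith [h2]
    have hpnorm : ‖p‖ < 1 := by
      have h1 : ‖p‖ * ‖p‖ = r * r := by
        rw [← Quaternion.normSq_eq_norm_mul_self, hp, hφ_apply, Quaternion.normSq_def']
        simp only [Quaternion.re_add, Quaternion.re_coe, Quaternion.re_smul,
          Quaternion.imI_add, Quaternion.imI_coe, Quaternion.imI_smul,
          Quaternion.imJ_add, Quaternion.imJ_coe, Quaternion.imJ_smul,
          Quaternion.imK_add, Quaternion.imK_coe, Quaternion.imK_smul,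
          hIre, smul_eq_mul, mul_zero, add_zero, zero_add]
        nlinarith [hI123, hsqz]
      have : ‖p‖ = r := by nlinarith [norm_nonneg p]
      rw [this]
      exact hr1
    have h0 := hpos2 p hpnorm
    have hq : HasSum (fun m : ℕ => (p ^ m * a m).re) ((∑' m : ℕ, p ^ m * a m).re) :=
      (hconv p hpnorm).hasSum.map
        (show Quaternion ℝ →ₗ[ℝ] ℝ from QuaternionAlgebra.reₗ _ _ _) Quaternion.continuous_re
    have hsc : Summable fun m : ℕ =>
        ((r ^ m : ℝ) : ℂ) * (c m * Complex.exp ((t : ℝ) * Complex.I) ^ m) := by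
      refine Summable.of_norm_bounded hsumc fun m => le_of_eq ?_
      rw [norm_mul, norm_mul, norm_pow,
        Complex.norm_exp_ofReal_mul_I, one_pow, mul_one, Complex.norm_real,
        Real.norm_eq_abs, _root_.abs_of_nonneg (pow_nonneg hr0 m), mul_comm]
    have hcre : HasSum
        (fun m : ℕ => (((r ^ m : ℝ) : ℂ) * (c m * Complex.exp ((t : ℝ) * Complex.I) ^ m)).re)
        ((∑' m : ℕ, ((r ^ m : ℝ) : ℂ) * (c m * Complex.exp ((t : ℝ) * Complex.I) ^ m)).re) :=
      Complex.hasSum_re hsc.hasSum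
    have hterm : (fun m : ℕ =>
        (((r ^ m : ℝ) : ℂ) * (c m * Complex.exp ((t : ℝ) * Complex.I) ^ m)).re)
        = fun m : ℕ => (p ^ m * a m).re := by
      funext m
      have hexp : Complex.exp ((t : ℝ) * Complex.I) ^ m
          = Complex.exp (((m * t : ℝ) : ℂ) * Complex.I) := by
        rw [← Complex.exp_nat_mul]
        congr 1
        push_cast
        ring
      have hzm : z ^ m = ((r ^ m : ℝ) : ℂ) * Complex.exp (((m * t : ℝ) : ℂ) * Complex.I) := by
        rw [hz, mul_pow, hexp]
        norm_cast
      have hpm : p ^ m * a m = ((r ^ m * Real.cos (m * t) : ℝ) : Quaternion ℝ) * a m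
          + (r ^ m * Real.sin (m * t)) • (I * a m) := by
        rw [hp, ← map_pow, hzm, hφ_apply]
        have hre : (((r ^ m : ℝ) : ℂ) * Complex.exp (((m * t : ℝ) : ℂ) * Complex.I)).re
            = r ^ m * Real.cos (m * t) := by
          rw [Complex.mul_re, Complex.ofReal_re, Complex.ofReal_im,
            Complex.exp_ofReal_mul_I_re, Complex.exp_ofReal_mul_I_im]
          ring
        have him : (((r ^ m : ℝ) : ℂ) * Complex.exp (((m * t : ℝ) : ℂ) * Complex.I)).im
            = r ^ m * Real.sin (m * t) := by
          rw [Complex.mul_im, Complex.ofReal_re, Complex.ofReal_im,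
            Complex.exp_ofReal_mul_I_re, Complex.exp_ofReal_mul_I_im]
          ring
        rw [hre, him, add_mul, smul_mul_assoc]
      rw [hpm]
      have hL : (((r ^ m : ℝ) : ℂ) * (c m * Complex.exp ((t : ℝ) * Complex.I) ^ m)).re
          = r ^ m * ((a m).re * Real.cos (m * t) + (I * a m).re * Real.sin (m * t)) := by
        rw [hexp, Complex.mul_re, Complex.ofReal_re, Complex.ofReal_im, Complex.mul_re,
          Complex.mul_im, Complex.exp_ofReal_mul_I_re, Complex.exp_ofReal_mul_I_im]
        have e1 : (c m).re = (a m).re := rfl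
        have e2 : (c m).im = -((I * a m).re) := rfl
        rw [e1, e2]
        ring
      rw [hL, Quaternion.re_add, Quaternion.re_smul, smul_eq_mul]
      have hcoe : (((r ^ m * Real.cos (m * t) : ℝ) : Quaternion ℝ) * a m).re
          = (r ^ m * Real.cos (m * t)) * (a m).re := by
        rw [Quaternion.re_mul, Quaternion.re_coe, Quaternion.imI_coe, Quaternion.imJ_coe,
          Quaternion.imK_coe]
        ring
      rw [hcoe]
      ring
    have heq : (∑' m : ℕ,
        ((r ^ m : ℝ) : ℂ) * (c m * Complex.exp ((t : ℝ) * Complex.I) ^ m)).re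
        = (∑' m : ℕ, p ^ m * a m).re := hcre.unique (hterm ▸ hq)
    rw [heq]
    exact h0
  have hb := caratheodory_bound c hc0 hr0 hr1 hsumc hkeypos n hn
  have hcn : ‖c n‖ ≤ 16 := by nlinarith [norm_nonneg (c n), hrn, hb]
  constructor
  · have h := Complex.abs_re_le_norm (c n)
    have e1 : (c n).re = (a n).re := rfl
    rw [e1] at h
    linarith
  · have h := Complex.abs_im_le_norm (c n)
    have e2 : (c n).im = -((I * a n).re) := rfl
    rw [e2, abs_neg] at h
    linarith


/-- boundedness of the coefficients of a slice hyperholomorphic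
function with positive real part and f(0)=1. -/
theorem coefficients_bounded
    (a : ℕ → Hq) (ha0 : a 0 = 1)
    (hconv : ∀ p : Hq, ‖p‖ < 1 → Summable fun n : ℕ => p ^ n * a n)
    (f : Hq → Hq) (hf : ∀ p : Hq, f p = ∑' n : ℕ, p ^ n * a n)
    (hpos : ∀ p : Hq, ‖p‖ < 1 → 0 ≤ (f p).re) :
    ∃ k : ℝ, ∀ n : ℕ, ‖a n‖ ≤ k := by
  refine ⟨32, fun n => ?_⟩
  rcases Nat.eq_zero_or_pos n with h0 | hn
  · rw [h0, ha0, norm_one]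
    norm_num
  · have hpos2 : ∀ p : Quaternion ℝ, ‖p‖ < 1 → 0 ≤ (∑' m : ℕ, p ^ m * a m).re := fun p hp => by
      rw [← hf p]; exact hpos p hp
    have hI1 : (⟨0, 1, 0, 0⟩ : Quaternion ℝ) * ⟨0, 1, 0, 0⟩ = -1 := by
      ext <;> norm_num [Quaternion.re_mul, Quaternion.imI_mul, Quaternion.imJ_mul,
        Quaternion.imK_mul]
    have hI2 : (⟨0, 0, 1, 0⟩ : Quaternion ℝ) * ⟨0, 0, 1, 0⟩ = -1 := by
      ext <;> norm_num [Quaternion.re_mul, Quaternion.imI_mul, Quaternion.imJ_mul,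
        Quaternion.imK_mul]
    have hI3 : (⟨0, 0, 0, 1⟩ : Quaternion ℝ) * ⟨0, 0, 0, 1⟩ = -1 := by
      ext <;> norm_num [Quaternion.re_mul, Quaternion.imI_mul, Quaternion.imJ_mul,
        Quaternion.imK_mul]
    obtain ⟨hb0, hb1⟩ := slice_bound a ha0 hconv hpos2 _ hI1 rfl n hn
    obtain ⟨-, hb2⟩ := slice_bound a ha0 hconv hpos2 _ hI2 rfl n hn
    obtain ⟨-, hb3⟩ := slice_bound a ha0 hconv hpos2 _ hI3 rfl n hn
    erw [Quaternion.re_mul] at hb1 hb2 hb3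
    norm_num at hb1 hb2 hb3
    have hns : ‖a n‖ * ‖a n‖ = (a n).re ^ 2 + (a n).imI ^ 2 + (a n).imJ ^ 2 + (a n).imK ^ 2 := by
      rw [← Quaternion.normSq_eq_norm_mul_self, Quaternion.normSq_def']
    nlinarith [norm_nonneg (a n), sq_abs (a n).re, sq_abs (a n).imI, sq_abs (a n).imJ,
      sq_abs (a n).imK, abs_nonneg (a n).re, abs_nonneg (a n).imI, abs_nonneg (a n).imJ,
      abs_nonneg (a n).imK]
end
end
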